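/- arXiv:2302.05401 — 5 statements merged into one kernel-verified Lean document; each statement's English description precedes it below -/
import Mathlib

section
/- Let d ≥ 3 be an integer and γ > −((d−2)/2)², and set σ = (d−2)/2 − (1/2)√((d−2)² + 4γ). Then for every f ∈ C_c^∞(ℝ^d \ {0}; ℂ) one has ∫_{ℝ^d} (|∇f(x)|² + γ|x|^{−2}|f(x)|²) dx = ∫_{ℝ^d} |∇f(x) + σ |x|^{−2} x f(x)|² dx; in particular the left-hand side is nonnegative. -/
noncomputable section

open MeasureTheory Complex

/-- Euclidean space `ℝ^d`. -/
abbrev Ed (d : ℕ) : Type := EuclideanSpace ℝ (Fin d)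

/-- `i`-th component of the gradient of a complex-valued function. -/
def grad {d : ℕ} (f : Ed d → ℂ) (x : Ed d) (i : Fin d) : ℂ :=
  fderiv ℝ f x (EuclideanSpace.single i 1)

/-- `|∇f(x)|²` for complex-valued `f`. -/
def gradNormSq {d : ℕ} (f : Ed d → ℂ) (x : Ed d) : ℝ :=
  ∑ i, ‖grad f x i‖ ^ 2

/-- `i`-th component of the gradient of a real-valued function. -/
def gradR {d : ℕ} (f : Ed d → ℝ) (x : Ed d) (i : Fin d) : ℝ :=
  fderiv ℝ f x (EuclideanSpace.single i 1)

/-- `|∇f(x)|²` for real-valued `f`. -/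
def gradNormSqR {d : ℕ} (f : Ed d → ℝ) (x : Ed d) : ℝ :=
  ∑ i, gradR f x i ^ 2

/-- The Euclidean Laplacian (sum of second partial derivatives). -/
def lapR {d : ℕ} (f : Ed d → ℝ) (x : Ed d) : ℝ :=
  ∑ i, fderiv ℝ (fun y => fderiv ℝ f y (EuclideanSpace.single i 1)) x
    (EuclideanSpace.single i 1)

/-- A function on `ℝ^d` is radial if it depends only on `|x|`. -/
def IsRadial {d : ℕ} {α : Type*} (f : Ed d → α) : Prop :=
  ∀ x y : Ed d, ‖x‖ = ‖y‖ → f x = f y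

/-- `f` is admissible: `C¹` away from the origin, `|∇f| ∈ L²`, `f ∈ L^{2*}`,
and `∫ |x|⁻²|f|² < ∞`. -/
def Admissible {d : ℕ} (f : Ed d → ℂ) : Prop :=
  ContDiffOn ℝ 1 f {(0 : Ed d)}ᶜ ∧
  Integrable (fun x => gradNormSq f x) ∧
  Integrable (fun x => ‖f x‖ ^ ((2 * d : ℝ) / ((d : ℝ) - 2))) ∧
  Integrable (fun x => ‖f x‖ ^ 2 / ‖x‖ ^ 2)

/-- Squared modified Sobolev norm `‖f‖²_{Ḣ¹_γ}`. -/
def H1gammaSq {d : ℕ} (γ : ℝ) (f : Ed d → ℂ) : ℝ :=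
  ∫ x, (gradNormSq f x + γ / ‖x‖ ^ 2 * ‖f x‖ ^ 2)

/-- The energy `E_γ[f]`. -/
def energy {d : ℕ} (γ : ℝ) (f : Ed d → ℂ) : ℝ :=
  (1 / 2) * H1gammaSq γ f -
    (((d : ℝ) - 2) / (2 * (d : ℝ))) * ∫ x, ‖f x‖ ^ ((2 * d : ℝ) / ((d : ℝ) - 2))

/-- The real inner product of `Ḣ¹` viewed as a real Hilbert space. -/
def H1inner {d : ℕ} (f g : Ed d → ℂ) : ℝ :=
  ∫ x, ∑ i, (grad f x i * (starRingEnd ℂ) (grad g x i)).re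

/-- The Talenti function `W_0`. -/
def W0 (d : ℕ) (x : Ed d) : ℝ :=
  ((d : ℝ) * ((d : ℝ) - 2)) ^ (((d : ℝ) - 2) / 4) *
    (1 + ‖x‖ ^ 2) ^ (-(((d : ℝ) - 2) / 2))

/-- `W_1 = ((d-2)/2) W_0 + x · ∇W_0`. -/
def W1 (d : ℕ) (x : Ed d) : ℝ :=
  (((d : ℝ) - 2) / 2) * W0 d x + fderiv ℝ (W0 d) x x

/-- The sharp Sobolev constant `C_S(0)`. -/
def CS0 (d : ℕ) : ℝ :=
  (∫ x, W0 d x ^ ((2 * d : ℝ) / ((d : ℝ) - 2))) ^ (((d : ℝ) - 2) / (2 * (d : ℝ))) /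
    Real.sqrt (∫ x, gradNormSqR (W0 d) x)

/-- The quadratic form `Q` from the energy expansion around `W_0`. -/
def Qform (d : ℕ) (g : Ed d → ℂ) : ℝ :=
  (1 / 2) * (∫ x, gradNormSq g x) -
    (1 / 2) * ∫ x, W0 d x ^ ((4 : ℝ) / ((d : ℝ) - 2)) *
      ((((d : ℝ) + 2) / ((d : ℝ) - 2)) * (g x).re ^ 2 + (g x).im ^ 2)

/-- The modulation `f_{[θ,μ]}(x) = e^{iθ} μ^{-(d-2)/2} f(x/μ)`. -/
def modScale {d : ℕ} (θ μ : ℝ) (f : Ed d → ℂ) (x : Ed d) : ℂ :=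
  Complex.exp ((θ : ℂ) * Complex.I) *
    ((μ ^ (-(((d : ℝ) - 2) / 2)) : ℝ) : ℂ) * f (μ⁻¹ • x)

/-- Squared modified Sobolev norm for real-valued functions. -/
def H1gammaSqR {d : ℕ} (γ : ℝ) (f : Ed d → ℝ) : ℝ :=
  ∫ x, (gradNormSqR f x + γ / ‖x‖ ^ 2 * f x ^ 2)

/-- Energy for real-valued functions. -/
def energyR {d : ℕ} (γ : ℝ) (f : Ed d → ℝ) : ℝ :=
  (1 / 2) * H1gammaSqR γ f -
    (((d : ℝ) - 2) / (2 * (d : ℝ))) * ∫ x, |f x| ^ ((2 * d : ℝ) / ((d : ℝ) - 2))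


/-- Expansion of `‖a + r b‖²` for complex numbers. -/
lemma hs_normsq_expand (a b : ℂ) (r : ℝ) :
    ‖a + (r : ℂ) * b‖ ^ 2 = ‖a‖ ^ 2 + 2 * r * ((starRingEnd ℂ) b * a).re + r ^ 2 * ‖b‖ ^ 2 := by
  simp only [Complex.sq_norm, Complex.normSq_apply, Complex.add_re,
    Complex.add_im, Complex.mul_re, Complex.mul_im, Complex.ofReal_re, Complex.ofReal_im,
    Complex.conj_re, Complex.conj_im]
  ring

lemma hs_sum_single {d : ℕ} (x : Ed d) :
    ∑ i, x i • EuclideanSpace.single i (1:ℝ) = x := by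
  have := (EuclideanSpace.basisFun (Fin d) ℝ).sum_repr x
  simpa [EuclideanSpace.basisFun_apply, EuclideanSpace.basisFun_repr] using this

lemma hs_sum_sq {d : ℕ} (x : Ed d) : ∑ i, (x i) ^ 2 = ‖x‖ ^ 2 := by
  rw [EuclideanSpace.norm_eq, Real.sq_sqrt (by positivity)]
  simp [sq_abs]

lemma hs_inner_single {d : ℕ} (x : Ed d) (i : Fin d) :
    (inner ℝ x (EuclideanSpace.single i (1:ℝ)) : ℝ) = x i := by
  rw [EuclideanSpace.inner_single_right]
  simp

/-- Gluing continuity: continuous away from 0 and vanishing near 0. -/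
lemma hs_glue_cont {d : ℕ} {g : Ed d → ℝ} {ε : ℝ} (hε : 0 < ε)
    (h1 : ContinuousOn g {(0 : Ed d)}ᶜ)
    (h2 : ∀ x ∈ Metric.ball (0 : Ed d) ε, g x = 0) : Continuous g := by
  rw [continuous_iff_continuousAt]
  intro x
  by_cases hx : x = 0
  · subst hx
    have hev : g =ᶠ[nhds (0 : Ed d)] fun _ => (0:ℝ) :=
      Filter.eventuallyEq_of_mem (Metric.ball_mem_nhds _ hε) h2
    exact ContinuousAt.congr continuousAt_const hev.symm
  · exact h1.continuousAt (isOpen_compl_singleton.mem_nhds hx)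

/-- The divergence computation for `w_i(y) = u(y) yᵢ / ‖y‖²`. -/
lemma hs_key {d : ℕ} (u : Ed d → ℝ) (hu : Differentiable ℝ u)
    (x : Ed d) (hx : x ≠ 0) :
    ∑ i, fderiv ℝ (fun y => u y * (y i * (‖y‖^2)⁻¹)) x (EuclideanSpace.single i 1)
      = (‖x‖^2)⁻¹ * fderiv ℝ u x x
        + ((d:ℝ) - 2) * (u x * (‖x‖^2)⁻¹) := by
  have hNx : (‖x‖:ℝ)^2 ≠ 0 := pow_ne_zero _ (norm_ne_zero_iff.2 hx)
  set U : Ed d →L[ℝ] ℝ := fderiv ℝ u x with hU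
  have huF : HasFDerivAt u U x := (hu x).hasFDerivAt
  have hN : HasFDerivAt (fun y : Ed d => ‖y‖^2)
      (2 • (innerSL ℝ x).comp (ContinuousLinearMap.id ℝ (Ed d))) x :=
    (hasFDerivAt_id x).norm_sq
  set Q : Ed d →L[ℝ] ℝ :=
    (ContinuousLinearMap.smulRight (1 : ℝ →L[ℝ] ℝ) (-((‖x‖^2)^2)⁻¹)).comp
      (2 • (innerSL ℝ x).comp (ContinuousLinearMap.id ℝ (Ed d))) with hQdef
  have hq : HasFDerivAt (fun y : Ed d => (‖y‖^2)⁻¹) Q x :=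
    (hasFDerivAt_inv hNx).comp x hN
  have hQe : ∀ i, Q (EuclideanSpace.single i 1) = 2 * x i * (-((‖x‖^2)^2)⁻¹) := by
    intro i
    simp [hQdef, hs_inner_single, mul_comm]
    ring
  have hP : ∀ i, HasFDerivAt (fun y : Ed d => y i) (EuclideanSpace.proj (𝕜 := ℝ) i) x :=
    fun i => (EuclideanSpace.proj (𝕜 := ℝ) i).hasFDerivAt
  have hw : ∀ i, HasFDerivAt (fun y => u y * (y i * (‖y‖^2)⁻¹))
      (u x • (x i • Q + (‖x‖^2)⁻¹ • (EuclideanSpace.proj (𝕜 := ℝ) i))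
        + (x i * (‖x‖^2)⁻¹) • U) x :=
    fun i => huF.mul ((hP i).mul hq)
  have hfde : ∀ i, fderiv ℝ (fun y => u y * (y i * (‖y‖^2)⁻¹)) x (EuclideanSpace.single i 1)
      = u x * (x i * (2 * x i * (-((‖x‖^2)^2)⁻¹)) + (‖x‖^2)⁻¹ * 1)
        + (x i * (‖x‖^2)⁻¹) * U (EuclideanSpace.single i 1) := by
    intro i
    rw [(hw i).fderiv]
    simp [hQe i, PiLp.proj_apply, EuclideanSpace.single_apply]
    ring
  have hUx : ∑ i, x i * U (EuclideanSpace.single i 1) = U x := by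
    calc ∑ i, x i * U (EuclideanSpace.single i 1)
        = ∑ i, U (x i • EuclideanSpace.single i 1) := by simp
      _ = U (∑ i, x i • EuclideanSpace.single i 1) := (map_sum U _ _).symm
      _ = U x := by rw [hs_sum_single]
  calc ∑ i, fderiv ℝ (fun y => u y * (y i * (‖y‖^2)⁻¹)) x (EuclideanSpace.single i 1)
      = ∑ i, ((2 * (-((‖x‖^2)^2)⁻¹) * u x) * (x i)^2 + u x * (‖x‖^2)⁻¹
          + (‖x‖^2)⁻¹ * (x i * U (EuclideanSpace.single i 1))) := by
        refine Finset.sum_congr rfl fun i _ => ?_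
        rw [hfde i]; ring
    _ = (2 * (-((‖x‖^2)^2)⁻¹) * u x) * (∑ i, (x i)^2) + (d:ℝ) * (u x * (‖x‖^2)⁻¹)
          + (‖x‖^2)⁻¹ * (∑ i, x i * U (EuclideanSpace.single i 1)) := by
        rw [Finset.sum_add_distrib, Finset.sum_add_distrib, ← Finset.mul_sum, ← Finset.mul_sum,
          Finset.sum_const, Finset.card_univ, Fintype.card_fin, nsmul_eq_mul]
        rw [← Finset.mul_sum]
        ring
    _ = (‖x‖^2)⁻¹ * fderiv ℝ u x x + ((d:ℝ) - 2) * (u x * (‖x‖^2)⁻¹) := by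
        rw [hs_sum_sq, hUx, ← hU]
        field_simp
        ring

lemma hs_fderiv_normsq {d : ℕ} (f : Ed d → ℂ) (hf : Differentiable ℝ f) (x v : Ed d) :
    fderiv ℝ (fun y => ‖f y‖ ^ 2) x v
      = 2 * ((starRingEnd ℂ) (f x) * fderiv ℝ f x v).re := by
  rw [((hf x).hasFDerivAt.norm_sq).fderiv]
  simp [Complex.inner]
  ring

/-- Pointwise expansion of the right-hand integrand. -/
lemma hs_pointwise {d : ℕ} (f : Ed d → ℂ) (hf : Differentiable ℝ f) (σ : ℝ)
    (x : Ed d) (hx : x ≠ 0) :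
    ∑ i, ‖grad f x i + ((σ / ‖x‖ ^ 2 * x i : ℝ) : ℂ) * f x‖ ^ 2
      = gradNormSq f x
        + σ * ((‖x‖ ^ 2)⁻¹ * fderiv ℝ (fun y => ‖f y‖ ^ 2) x x)
        + σ ^ 2 * (‖f x‖ ^ 2 * (‖x‖ ^ 2)⁻¹) := by
  have hNx : (‖x‖ : ℝ) ^ 2 ≠ 0 := pow_ne_zero _ (norm_ne_zero_iff.2 hx)
  set U : Ed d →L[ℝ] ℝ := fderiv ℝ (fun y => ‖f y‖ ^ 2) x with hU
  have hUx : ∑ i, x i * U (EuclideanSpace.single i 1) = U x := by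
    calc ∑ i, x i * U (EuclideanSpace.single i 1)
        = ∑ i, U (x i • EuclideanSpace.single i 1) := by simp
      _ = U (∑ i, x i • EuclideanSpace.single i 1) := (map_sum U _ _).symm
      _ = U x := by rw [hs_sum_single]
  calc ∑ i, ‖grad f x i + ((σ / ‖x‖ ^ 2 * x i : ℝ) : ℂ) * f x‖ ^ 2
      = ∑ i, (‖grad f x i‖ ^ 2 + (σ * (‖x‖ ^ 2)⁻¹) * (x i * U (EuclideanSpace.single i 1))
          + (σ ^ 2 * ((‖x‖ ^ 2)⁻¹) ^ 2 * ‖f x‖ ^ 2) * (x i) ^ 2) := by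
        refine Finset.sum_congr rfl fun i _ => ?_
        have h2 : U (EuclideanSpace.single i 1)
            = 2 * ((starRingEnd ℂ) (f x) * grad f x i).re := by
          rw [hU]; exact hs_fderiv_normsq f hf x _
        rw [hs_normsq_expand, h2, div_eq_mul_inv]
        ring
    _ = gradNormSq f x + (σ * (‖x‖ ^ 2)⁻¹) * (∑ i, x i * U (EuclideanSpace.single i 1))
          + (σ ^ 2 * ((‖x‖ ^ 2)⁻¹) ^ 2 * ‖f x‖ ^ 2) * (∑ i, (x i) ^ 2) := by
        rw [Finset.sum_add_distrib, Finset.sum_add_distrib, ← Finset.mul_sum, ← Finset.mul_sum]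
        rfl
    _ = _ := by
        rw [hUx, hs_sum_sq]
        field_simp

/-- the identity `∫ (|∇f|² + γ|x|⁻²|f|²) = ∫ |∇f + σ|x|⁻² x f|²`
for smooth compactly supported `f` vanishing near the origin, and nonnegativity. -/
theorem statement0 (d : ℕ) (hd : 3 ≤ d) (γ : ℝ)
    (hγ : -((((d : ℝ) - 2) / 2) ^ 2) < γ)
    (σ : ℝ) (hσ : σ = ((d : ℝ) - 2) / 2 - (1 / 2) * Real.sqrt (((d : ℝ) - 2) ^ 2 + 4 * γ))
    (f : Ed d → ℂ) (hf : ContDiff ℝ (⊤ : ℕ∞) f) (hsupp : HasCompactSupport f)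
    (h0 : (0 : Ed d) ∉ tsupport f) :
    (∫ x, (gradNormSq f x + γ / ‖x‖ ^ 2 * ‖f x‖ ^ 2)) =
      (∫ x, ∑ i, ‖grad f x i + ((σ / ‖x‖ ^ 2 * x i : ℝ) : ℂ) * f x‖ ^ 2) ∧
    0 ≤ ∫ x, (gradNormSq f x + γ / ‖x‖ ^ 2 * ‖f x‖ ^ 2) := by

  -- numerics
  have hd2 : (2:ℝ) < (d:ℝ) := by
    have h3 : (3:ℝ) ≤ (d:ℝ) := by exact_mod_cast hd
    linarith
  have hdisc : (0:ℝ) ≤ ((d : ℝ) - 2) ^ 2 + 4 * γ := by nlinarith [hγ]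
  have hσγ : σ ^ 2 - ((d:ℝ) - 2) * σ = γ := by
    have h1 : Real.sqrt (((d : ℝ) - 2) ^ 2 + 4 * γ) ^ 2 = ((d : ℝ) - 2) ^ 2 + 4 * γ :=
      Real.sq_sqrt hdisc
    rw [hσ]; nlinarith [h1]
  -- support away from origin
  obtain ⟨ε, hε, hball⟩ := Metric.isOpen_iff.1 (isClosed_tsupport f).isOpen_compl 0 h0
  have hf0 : ∀ x ∈ Metric.ball (0 : Ed d) ε, f x = 0 := fun x hx =>
    image_eq_zero_of_notMem_tsupport (hball hx)
  -- basic regularity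
  have hf1 : ContDiff ℝ 1 f := hf.of_le (by exact_mod_cast le_top)
  have hfdiff : Differentiable ℝ f := hf1.differentiable one_ne_zero
  have hfderiv0 : ∀ x, x ∉ tsupport f → fderiv ℝ f x = 0 := by
    intro x hx
    have hev : f =ᶠ[nhds x] (fun _ => (0:ℂ)) :=
      Filter.eventuallyEq_of_mem ((isClosed_tsupport f).isOpen_compl.mem_nhds hx)
        (fun y hy => image_eq_zero_of_notMem_tsupport hy)
    rw [hev.fderiv_eq]
    exact fderiv_const_apply 0
  have hu1 : ContDiff ℝ 1 (fun x : Ed d => ‖f x‖ ^ 2) := hf1.norm_sq ℂ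
  have hudiff : Differentiable ℝ (fun x : Ed d => ‖f x‖ ^ 2) := hu1.differentiable one_ne_zero
  have hucont : Continuous (fun x : Ed d => ‖f x‖ ^ 2) := hf1.continuous.norm.pow 2
  have huderiv0 : ∀ x, x ∉ tsupport f → fderiv ℝ (fun y : Ed d => ‖f y‖ ^ 2) x = 0 := by
    intro x hx
    have hev : (fun y : Ed d => ‖f y‖ ^ 2) =ᶠ[nhds x] (fun _ => (0:ℝ)) :=
      Filter.eventuallyEq_of_mem ((isClosed_tsupport f).isOpen_compl.mem_nhds hx)
        (fun y hy => by simp [image_eq_zero_of_notMem_tsupport hy])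
    rw [hev.fderiv_eq]
    exact fderiv_const_apply 0
  have hNcont : ContinuousOn (fun x : Ed d => (‖x‖ ^ 2)⁻¹) {(0 : Ed d)}ᶜ :=
    ((continuous_norm.pow 2).continuousOn).inv₀ fun x hx =>
      pow_ne_zero _ (norm_ne_zero_iff.2 (by simpa using hx))
  -- integrability of the three basic integrands
  have hA1cont : Continuous (fun x => gradNormSq f x) := by
    have h1 : Continuous (fderiv ℝ f) := hf1.continuous_fderiv one_ne_zero
    unfold gradNormSq grad
    exact continuous_finset_sum _ fun i _ => ((h1.clm_apply continuous_const).norm.pow 2)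
  have hA1supp : HasCompactSupport (fun x => gradNormSq f x) := by
    apply hsupp.mono'
    intro x hx
    by_contra hmem
    exact hx (by simp [gradNormSq, grad, hfderiv0 x hmem])
  have hA1int : Integrable (fun x => gradNormSq f x) :=
    hA1cont.integrable_of_hasCompactSupport hA1supp
  have hA2cont : Continuous (fun x : Ed d => ‖f x‖ ^ 2 * (‖x‖ ^ 2)⁻¹) :=
    hs_glue_cont hε (hucont.continuousOn.mul hNcont) (fun x hx => by simp [hf0 x hx])
  have hA2supp : HasCompactSupport (fun x : Ed d => ‖f x‖ ^ 2 * (‖x‖ ^ 2)⁻¹) := by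
    apply hsupp.mono'
    intro x hx
    by_contra hmem
    exact hx (by simp [image_eq_zero_of_notMem_tsupport hmem])
  have hA2int : Integrable (fun x : Ed d => ‖f x‖ ^ 2 * (‖x‖ ^ 2)⁻¹) :=
    hA2cont.integrable_of_hasCompactSupport hA2supp
  have huderiv_cont : Continuous (fun x : Ed d => fderiv ℝ (fun y : Ed d => ‖f y‖ ^ 2) x x) :=
    (hu1.continuous_fderiv one_ne_zero).clm_apply continuous_id
  have hA3cont : Continuous
      (fun x : Ed d => (‖x‖ ^ 2)⁻¹ * fderiv ℝ (fun y : Ed d => ‖f y‖ ^ 2) x x) :=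
    hs_glue_cont hε (hNcont.mul huderiv_cont.continuousOn)
      (fun x hx => by rw [huderiv0 x (hball hx)]; simp)
  have hA3supp : HasCompactSupport
      (fun x : Ed d => (‖x‖ ^ 2)⁻¹ * fderiv ℝ (fun y : Ed d => ‖f y‖ ^ 2) x x) := by
    apply hsupp.mono'
    intro x hx
    by_contra hmem
    refine hx ?_
    show (‖x‖ ^ 2)⁻¹ * fderiv ℝ (fun y : Ed d => ‖f y‖ ^ 2) x x = 0
    rw [huderiv0 x hmem]
    simp
  have hA3int : Integrable
      (fun x : Ed d => (‖x‖ ^ 2)⁻¹ * fderiv ℝ (fun y : Ed d => ‖f y‖ ^ 2) x x) :=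
    hA3cont.integrable_of_hasCompactSupport hA3supp
  -- the vector field W
  set W : Fin d → Ed d → ℝ := fun i y => ‖f y‖ ^ 2 * (y i * (‖y‖ ^ 2)⁻¹) with hWdef
  have hWcd : ∀ i, ContDiff ℝ 1 (W i) := by
    intro i
    rw [contDiff_iff_contDiffAt]
    intro x
    by_cases hx : x = 0
    · subst hx
      refine ContDiffAt.congr_of_eventuallyEq (contDiffAt_const (c := (0:ℝ))) ?_
      exact Filter.eventuallyEq_of_mem (Metric.ball_mem_nhds _ hε)
        (fun y hy => by simp [hWdef, hf0 y hy])
    · have hNx : ‖x‖ ^ 2 ≠ 0 := pow_ne_zero _ (norm_ne_zero_iff.2 hx)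
      exact (hu1.contDiffAt).mul
        (((EuclideanSpace.proj (𝕜 := ℝ) i).contDiff.contDiffAt).mul
          (((contDiff_norm_sq (𝕜 := ℝ) (E := Ed d)).contDiffAt).inv hNx))
  have hWdiff : ∀ i, Differentiable ℝ (W i) := fun i => (hWcd i).differentiable one_ne_zero
  have hWsupp : ∀ i, HasCompactSupport (W i) := by
    intro i
    apply hsupp.mono'
    intro x hx
    by_contra hmem
    exact hx (by simp [hWdef, image_eq_zero_of_notMem_tsupport hmem])
  have hWdint : ∀ i, Integrable
      (fun x => fderiv ℝ (W i) x (EuclideanSpace.single i 1)) := by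
    intro i
    refine (((hWcd i).continuous_fderiv one_ne_zero).clm_apply continuous_const).integrable_of_hasCompactSupport ?_
    apply ((hWsupp i).fderiv (𝕜 := ℝ)).mono'
    intro x hx
    exact subset_tsupport _ (show fderiv ℝ (W i) x ≠ 0 from fun h => hx (by simp [h]))
  -- integration by parts: each ∫ ∂ᵢ Wᵢ = 0
  have hIBP : ∀ i, ∫ x, fderiv ℝ (W i) x (EuclideanSpace.single i 1) = 0 := by
    intro i
    have hWint : Integrable (W i) := (hWcd i).continuous.integrable_of_hasCompactSupport (hWsupp i)
    have hzero : Integrable (fun x : Ed d =>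
        W i x * (fderiv ℝ (fun _ : Ed d => (1:ℝ)) x) (EuclideanSpace.single i 1)) := by
      simp only [fderiv_fun_const, Pi.zero_apply, ContinuousLinearMap.zero_apply, mul_zero]
      exact integrable_zero _ _ _
    have h := integral_mul_fderiv_eq_neg_fderiv_mul_of_integrable
      (f := W i) (g := fun _ : Ed d => (1:ℝ)) (v := EuclideanSpace.single i 1)
      (by simpa using hWdint i) hzero (by simpa using hWint)
      (fun x _ => hWdiff i x) (fun x _ => differentiableAt_const (1:ℝ))
    simp only [fderiv_fun_const, Pi.zero_apply, ContinuousLinearMap.zero_apply, mul_zero, mul_one,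
      integral_zero] at h
    linarith [h]
  -- a.e. avoidance of the origin
  have hd0 : 0 < d := by omega
  haveI : Nontrivial (Ed d) := by
    refine ⟨0, EuclideanSpace.single ⟨0, hd0⟩ 1, fun h => ?_⟩
    have h2 := congrArg norm h
    rw [norm_zero, EuclideanSpace.norm_single] at h2
    norm_num at h2
  haveI : Filter.NeBot (nhdsWithin (0 : Ed d) {(0 : Ed d)}ᶜ) :=
    Module.punctured_nhds_neBot ℝ (Ed d) 0
  have hae : ∀ᵐ x : Ed d, x ≠ (0 : Ed d) := by
    have hvol0 : volume ({(0 : Ed d)} : Set (Ed d)) = 0 := measure_singleton _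
    rw [MeasureTheory.ae_iff]
    convert hvol0 using 2
    ext x
    simp
  -- the divergence theorem identity
  have hdivae : ∀ᵐ x : Ed d, ∑ i, fderiv ℝ (W i) x (EuclideanSpace.single i 1)
      = (‖x‖ ^ 2)⁻¹ * fderiv ℝ (fun y : Ed d => ‖f y‖ ^ 2) x x
        + ((d:ℝ) - 2) * (‖f x‖ ^ 2 * (‖x‖ ^ 2)⁻¹) :=
    hae.mono fun x hx => hs_key (fun y => ‖f y‖ ^ 2) hudiff x hx
  have hdiv : ∫ x, ((‖x‖ ^ 2)⁻¹ * fderiv ℝ (fun y : Ed d => ‖f y‖ ^ 2) x x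
      + ((d:ℝ) - 2) * (‖f x‖ ^ 2 * (‖x‖ ^ 2)⁻¹)) = 0 := by
    rw [← integral_congr_ae hdivae, integral_finset_sum _ (fun i _ => hWdint i)]
    simp [hIBP]
  have hA3val : ∫ x, (‖x‖ ^ 2)⁻¹ * fderiv ℝ (fun y : Ed d => ‖f y‖ ^ 2) x x
      = -(((d:ℝ) - 2)) * ∫ x, ‖f x‖ ^ 2 * (‖x‖ ^ 2)⁻¹ := by
    have h2 : Integrable (fun x : Ed d => ((d:ℝ) - 2) * (‖f x‖ ^ 2 * (‖x‖ ^ 2)⁻¹)) :=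
      hA2int.const_mul _
    rw [integral_add hA3int h2, integral_const_mul] at hdiv
    linarith [hdiv]
  -- computing the RHS
  have hRptwise : ∀ᵐ x : Ed d,
      (∑ i, ‖grad f x i + ((σ / ‖x‖ ^ 2 * x i : ℝ) : ℂ) * f x‖ ^ 2)
        = gradNormSq f x + σ * ((‖x‖ ^ 2)⁻¹ * fderiv ℝ (fun y : Ed d => ‖f y‖ ^ 2) x x)
          + σ ^ 2 * (‖f x‖ ^ 2 * (‖x‖ ^ 2)⁻¹) :=
    hae.mono fun x hx => hs_pointwise f hfdiff σ x hx
  have hRHS : (∫ x, ∑ i, ‖grad f x i + ((σ / ‖x‖ ^ 2 * x i : ℝ) : ℂ) * f x‖ ^ 2)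
      = (∫ x, gradNormSq f x) + γ * ∫ x, ‖f x‖ ^ 2 * (‖x‖ ^ 2)⁻¹ := by
    have hI3 : Integrable (fun x : Ed d =>
        σ * ((‖x‖ ^ 2)⁻¹ * fderiv ℝ (fun y : Ed d => ‖f y‖ ^ 2) x x)) volume :=
      hA3int.const_mul σ
    have hI2 : Integrable (fun x : Ed d => σ ^ 2 * (‖f x‖ ^ 2 * (‖x‖ ^ 2)⁻¹)) volume :=
      hA2int.const_mul _
    have hI13 : Integrable (fun x : Ed d => gradNormSq f x
        + σ * ((‖x‖ ^ 2)⁻¹ * fderiv ℝ (fun y : Ed d => ‖f y‖ ^ 2) x x)) volume :=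
      hA1int.add hI3
    rw [integral_congr_ae hRptwise, integral_add hI13 hI2, integral_add hA1int hI3,
      integral_const_mul, integral_const_mul, hA3val]
    linear_combination (∫ x, ‖f x‖ ^ 2 * (‖x‖ ^ 2)⁻¹ : ℝ) * hσγ
  -- computing the LHS
  have hLHS : (∫ x, (gradNormSq f x + γ / ‖x‖ ^ 2 * ‖f x‖ ^ 2))
      = (∫ x, gradNormSq f x) + γ * ∫ x, ‖f x‖ ^ 2 * (‖x‖ ^ 2)⁻¹ := by
    have hfun : (fun x : Ed d => gradNormSq f x + γ / ‖x‖ ^ 2 * ‖f x‖ ^ 2)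
        = fun x : Ed d => gradNormSq f x + γ * (‖f x‖ ^ 2 * (‖x‖ ^ 2)⁻¹) := by
      funext x
      rw [div_eq_mul_inv]
      ring
    have hI2 : Integrable (fun x : Ed d => γ * (‖f x‖ ^ 2 * (‖x‖ ^ 2)⁻¹)) volume :=
      hA2int.const_mul _
    rw [hfun, integral_add hA1int hI2, integral_const_mul]
  have hmain : (∫ x, (gradNormSq f x + γ / ‖x‖ ^ 2 * ‖f x‖ ^ 2)) =
      (∫ x, ∑ i, ‖grad f x i + ((σ / ‖x‖ ^ 2 * x i : ℝ) : ℂ) * f x‖ ^ 2) :=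
    hLHS.trans hRHS.symm
  refine ⟨hmain, ?_⟩
  rw [hmain]
  exact integral_nonneg fun x => Finset.sum_nonneg fun i _ => by positivity
end
end

section
/- Let d ≥ 3 be an integer and γ > −(d−2)²/4, and set β = √(1 + 4γ/(d−2)²). Then the function W_γ(x) = [d(d−2)β²]^{(d−2)/4} (|x|^{β−1}/(1 + |x|^{2β}))^{(d−2)/2} satisfies the static equation −ΔW_γ(x) + γ|x|^{−2} W_γ(x) = W_γ(x)^{(d+2)/(d−2)} for every x ∈ ℝ^d \ {0}. -/
noncomputable section

open MeasureTheory Complex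

lemma sum_sq_eq (d : ℕ) (x : Ed d) : ∑ i, x i ^ 2 = ‖x‖ ^ 2 := by
  rw [EuclideanSpace.norm_eq, Real.sq_sqrt (by positivity)]
  simp [sq_abs]

lemma radial_fderiv {d : ℕ} (G g1 : ℝ → ℝ) (W : Ed d → ℝ)
    (hWG : ∀ y : Ed d, y ≠ 0 → W y = G (‖y‖ ^ 2))
    (hG : ∀ t : ℝ, 0 < t → HasDerivAt G (g1 t) t)
    (y : Ed d) (hy : y ≠ 0) (i : Fin d) :
    fderiv ℝ W y (EuclideanSpace.single i 1) = g1 (‖y‖ ^ 2) * (2 * y i) := by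
  have hev : W =ᶠ[nhds y] fun z => G (‖z‖ ^ 2) := by
    filter_upwards [isOpen_compl_singleton.mem_nhds (by simpa using hy)] with z hz
    exact hWG z (by simpa using hz)
  have hN : HasFDerivAt (fun z : Ed d => ‖z‖ ^ 2) (2 • (innerSL ℝ y)) y :=
    (hasStrictFDerivAt_norm_sq y).hasFDerivAt
  have ht : (0:ℝ) < ‖y‖ ^ 2 := by
    have : ‖y‖ ≠ 0 := by simpa using hy
    positivity
  have hcomp : HasFDerivAt (fun z : Ed d => G (‖z‖ ^ 2))
      (g1 (‖y‖ ^ 2) • (2 • (innerSL ℝ y))) y :=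
    (hG _ ht).comp_hasFDerivAt y hN
  rw [hev.fderiv_eq, hcomp.fderiv]
  simp [real_inner_comm, EuclideanSpace.inner_single_right]

lemma radial_lapR {d : ℕ} (G g1 g2 : ℝ → ℝ) (W : Ed d → ℝ)
    (hWG : ∀ y : Ed d, y ≠ 0 → W y = G (‖y‖ ^ 2))
    (hG : ∀ t : ℝ, 0 < t → HasDerivAt G (g1 t) t)
    (hg1 : ∀ t : ℝ, 0 < t → HasDerivAt g1 (g2 t) t)
    (x : Ed d) (hx : x ≠ 0) :
    lapR W x = 4 * ‖x‖ ^ 2 * g2 (‖x‖ ^ 2) + 2 * d * g1 (‖x‖ ^ 2) := by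
  have hxn : ‖x‖ ≠ 0 := by simpa using hx
  have ht : (0:ℝ) < ‖x‖ ^ 2 := by positivity
  have key : ∀ i : Fin d,
      fderiv ℝ (fun y => fderiv ℝ W y (EuclideanSpace.single i 1)) x
        (EuclideanSpace.single i 1)
      = g2 (‖x‖ ^ 2) * (2 * x i) * (2 * x i) + g1 (‖x‖ ^ 2) * 2 := by
    intro i
    have hev : (fun y => fderiv ℝ W y (EuclideanSpace.single i 1)) =ᶠ[nhds x]
        fun y => g1 (‖y‖ ^ 2) * (2 * y i) := by
      filter_upwards [isOpen_compl_singleton.mem_nhds (by simpa using hx)] with z hz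
      exact radial_fderiv G g1 W hWG hG z (by simpa using hz) i
    -- derivative of y ↦ g1 (‖y‖^2)
    have hA : HasFDerivAt (fun y : Ed d => g1 (‖y‖ ^ 2))
        (g2 (‖x‖ ^ 2) • (2 • (innerSL ℝ x))) x :=
      (hg1 _ ht).comp_hasFDerivAt x (hasStrictFDerivAt_norm_sq x).hasFDerivAt
    have hB : HasFDerivAt (fun y : Ed d => 2 * y i)
        ((2:ℝ) • (EuclideanSpace.proj i : Ed d →L[ℝ] ℝ)) x := by
      simpa using ((EuclideanSpace.proj (𝕜 := ℝ) i).hasFDerivAt (x := x)).const_mul (2:ℝ)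
    have hprod := hA.mul hB
    rw [hev.fderiv_eq, show (fun y : Ed d => g1 (‖y‖ ^ 2) * (2 * y i)) =
      (fun y : Ed d => g1 (‖y‖ ^ 2)) * (fun y : Ed d => 2 * y i) from rfl, hprod.fderiv]
    simp [real_inner_comm, EuclideanSpace.inner_single_left, EuclideanSpace.inner_single_right]
    ring
  rw [lapR]
  rw [Finset.sum_congr rfl fun i _ => key i]
  rw [Finset.sum_add_distrib, Finset.sum_const]
  have : ∑ i, g2 (‖x‖ ^ 2) * (2 * x i) * (2 * x i)
      = 4 * ‖x‖ ^ 2 * g2 (‖x‖ ^ 2) := by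
    rw [← sum_sq_eq d x, Finset.mul_sum, Finset.sum_mul]
    apply Finset.sum_congr rfl fun i _ => by ring
  rw [this]
  simp [Finset.card_univ]
  ring

def Gfun (C p a β t : ℝ) : ℝ := C * (t ^ p * (1 + t ^ β) ^ (-a))

def g1fun (C p a β t : ℝ) : ℝ :=
  C * (p * t ^ (p - 1) * (1 + t ^ β) ^ (-a)
    - a * β * t ^ (p + β - 1) * (1 + t ^ β) ^ (-(a + 1)))

def g2fun (C p a β t : ℝ) : ℝ :=
  C * (p * (p - 1) * t ^ (p - 2) * (1 + t ^ β) ^ (-a)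
    - a * β * (2 * p + β - 1) * t ^ (p + β - 2) * (1 + t ^ β) ^ (-(a + 1))
    + a * β ^ 2 * (a + 1) * t ^ (p + 2 * β - 2) * (1 + t ^ β) ^ (-(a + 2)))

lemma hasDerivAt_Gfun (C p a β t : ℝ) (ht : 0 < t) :
    HasDerivAt (Gfun C p a β) (g1fun C p a β t) t := by
  have hs : (0:ℝ) < 1 + t ^ β := by positivity
  have h1 : HasDerivAt (fun t : ℝ => t ^ p) (p * t ^ (p - 1)) t :=
    Real.hasDerivAt_rpow_const (Or.inl ht.ne')
  have h2 : HasDerivAt (fun t : ℝ => 1 + t ^ β) (β * t ^ (β - 1)) t :=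
    (Real.hasDerivAt_rpow_const (Or.inl ht.ne')).const_add 1
  have h3 : HasDerivAt (fun t : ℝ => (1 + t ^ β) ^ (-a))
      ((β * t ^ (β - 1)) * (-a) * (1 + t ^ β) ^ (-a - 1)) t :=
    h2.rpow_const (Or.inl hs.ne')
  have h4 := (h1.mul h3).const_mul C
  refine h4.congr_deriv ?_
  unfold g1fun
  have e1 : t ^ (p + β - 1) = t ^ p * t ^ (β - 1) := by
    rw [show p + β - 1 = p + (β - 1) by ring, Real.rpow_add ht]
  have e2 : (1 + t ^ β) ^ (-(a + 1)) = (1 + t ^ β) ^ (-a - 1) := by ring_nf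
  rw [e1, e2]; ring

lemma hasDerivAt_g1fun (C p a β t : ℝ) (ht : 0 < t) :
    HasDerivAt (g1fun C p a β) (g2fun C p a β t) t := by
  have hs : (0:ℝ) < 1 + t ^ β := by positivity
  have h2 : HasDerivAt (fun t : ℝ => 1 + t ^ β) (β * t ^ (β - 1)) t :=
    (Real.hasDerivAt_rpow_const (Or.inl ht.ne')).const_add 1
  have h3 : HasDerivAt (fun t : ℝ => (1 + t ^ β) ^ (-a))
      ((β * t ^ (β - 1)) * (-a) * (1 + t ^ β) ^ (-a - 1)) t :=
    h2.rpow_const (Or.inl hs.ne')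
  have h3' : HasDerivAt (fun t : ℝ => (1 + t ^ β) ^ (-(a + 1)))
      ((β * t ^ (β - 1)) * (-(a + 1)) * (1 + t ^ β) ^ (-(a + 1) - 1)) t :=
    h2.rpow_const (Or.inl hs.ne')
  have ha : HasDerivAt (fun t : ℝ => t ^ (p - 1)) ((p - 1) * t ^ (p - 1 - 1)) t :=
    Real.hasDerivAt_rpow_const (Or.inl ht.ne')
  have hb : HasDerivAt (fun t : ℝ => t ^ (p + β - 1)) ((p + β - 1) * t ^ (p + β - 1 - 1)) t :=
    Real.hasDerivAt_rpow_const (Or.inl ht.ne')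
  have h5 := ((((ha.mul h3).const_mul p).sub ((hb.mul h3').const_mul (a * β))).const_mul C)
  have hfun : g1fun C p a β = fun y =>
      C * (p * (y ^ (p - 1) * (1 + y ^ β) ^ (-a))
        - a * β * (y ^ (p + β - 1) * (1 + y ^ β) ^ (-(a + 1)))) := by
    funext y; unfold g1fun; ring
  rw [hfun]
  refine h5.congr_deriv ?_
  unfold g2fun
  have E1 : t ^ (p - 1 - 1) = t ^ (p - 2) := by ring_nf
  have E2 : t ^ (p + β - 1 - 1) = t ^ (p - 2) * (t ^ (β - 1) * t) := by
    rw [show p + β - 1 - 1 = (p - 2) + ((β - 1) + 1) by ring, Real.rpow_add ht,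
      Real.rpow_add ht, Real.rpow_one]
  have E3 : t ^ (p - 1) = t ^ (p - 2) * t := by
    rw [show p - 1 = (p - 2) + 1 by ring, Real.rpow_add ht, Real.rpow_one]
  have E4 : t ^ (p + β - 2) = t ^ (p - 2) * (t ^ (β - 1) * t) := by
    rw [show p + β - 2 = (p - 2) + ((β - 1) + 1) by ring, Real.rpow_add ht,
      Real.rpow_add ht, Real.rpow_one]
  have E5 : t ^ (p + β - 1) = t ^ (p - 2) * (t ^ (β - 1) * t * t) := by
    rw [show p + β - 1 = (p - 2) + ((β - 1) + 1 + 1) by ring, Real.rpow_add ht,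
      Real.rpow_add ht, Real.rpow_add ht, Real.rpow_one]
  have E6 : t ^ (p + 2 * β - 2) = t ^ (p - 2) * (t ^ (β - 1) * t ^ (β - 1) * t * t) := by
    rw [show p + 2 * β - 2 = (p - 2) + ((β - 1) + (β - 1) + 1 + 1) by ring, Real.rpow_add ht,
      Real.rpow_add ht, Real.rpow_add ht, Real.rpow_add ht, Real.rpow_one]
  have hT : (0:ℝ) < 1 + t ^ β := hs
  have F1 : (1 + t ^ β) ^ (-a) = (1 + t ^ β) ^ (-(a + 2)) * ((1 + t ^ β) * (1 + t ^ β)) := by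
    rw [show -a = -(a + 2) + (1 + 1) by ring, Real.rpow_add hT, Real.rpow_add hT, Real.rpow_one]
  have F2 : (1 + t ^ β) ^ (-a - 1) = (1 + t ^ β) ^ (-(a + 2)) * (1 + t ^ β) := by
    rw [show -a - 1 = -(a + 2) + 1 by ring, Real.rpow_add hT, Real.rpow_one]
  have F3 : (1 + t ^ β) ^ (-(a + 1)) = (1 + t ^ β) ^ (-(a + 2)) * (1 + t ^ β) := by
    rw [show -(a + 1) = -(a + 2) + 1 by ring, Real.rpow_add hT, Real.rpow_one]
  have F4 : (1 + t ^ β) ^ (-(a + 1) - 1) = (1 + t ^ β) ^ (-(a + 2)) := by ring_nf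
  rw [E1, E2, E3, E4, E5, E6, F1, F2, F3, F4]
  ring

lemma ode_identity (d : ℕ) (hd : 3 ≤ d) (γ β a p K C : ℝ) (hβ : 0 < β)
    (hγ : γ = (β ^ 2 - 1) * ((d : ℝ) - 2) ^ 2 / 4)
    (ha : a = ((d : ℝ) - 2) / 2) (hp : p = (β - 1) * ((d : ℝ) - 2) / 4)
    (hK : K = (d : ℝ) * ((d : ℝ) - 2) * β ^ 2) (hC : C = K ^ (((d : ℝ) - 2) / 4))
    (t : ℝ) (ht : 0 < t) :
    -(4 * t * g2fun C p a β t + 2 * (d : ℝ) * g1fun C p a β t)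
      + γ / t * Gfun C p a β t
    = Gfun C p a β t ^ (((d : ℝ) + 2) / ((d : ℝ) - 2)) := by
  have hd3 : (3:ℝ) ≤ (d:ℝ) := by exact_mod_cast hd
  have hd2 : (0:ℝ) < (d:ℝ) - 2 := by linarith
  have hd2' : ((d:ℝ)) - 2 ≠ 0 := ne_of_gt hd2
  have hKpos : 0 < K := by
    rw [hK]; apply mul_pos (mul_pos (by linarith) hd2) (pow_pos hβ 2)
  have hCpos : 0 < C := hC ▸ Real.rpow_pos_of_pos hKpos _
  have hs : 0 < t ^ β := Real.rpow_pos_of_pos ht β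
  have hT : (0:ℝ) < 1 + t ^ β := by linarith
  set q : ℝ := ((d : ℝ) + 2) / ((d : ℝ) - 2) with hq
  -- atoms
  have E2 : t ^ p = t ^ (p - 2) * (t * t) := by
    conv_lhs => rw [show p = (p - 2) + (1 + 1) by ring, Real.rpow_add ht, Real.rpow_add ht, Real.rpow_one]
  have E3 : t ^ (p - 1) = t ^ (p - 2) * t := by
    conv_lhs => rw [show p - 1 = (p - 2) + 1 by ring, Real.rpow_add ht, Real.rpow_one]
  have E4 : t ^ (p + β - 2) = t ^ (p - 2) * (t ^ (β - 1) * t) := by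
    conv_lhs => rw [show p + β - 2 = (p - 2) + ((β - 1) + 1) by ring, Real.rpow_add ht,
      Real.rpow_add ht, Real.rpow_one]
  have E5 : t ^ (p + β - 1) = t ^ (p - 2) * (t ^ (β - 1) * t * t) := by
    conv_lhs => rw [show p + β - 1 = (p - 2) + ((β - 1) + 1 + 1) by ring, Real.rpow_add ht,
      Real.rpow_add ht, Real.rpow_add ht, Real.rpow_one]
  have E6 : t ^ (p + 2 * β - 2) = t ^ (p - 2) * (t ^ (β - 1) * t ^ (β - 1) * t * t) := by
    conv_lhs => rw [show p + 2 * β - 2 = (p - 2) + ((β - 1) + (β - 1) + 1 + 1) by ring, Real.rpow_add ht,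
      Real.rpow_add ht, Real.rpow_add ht, Real.rpow_add ht, Real.rpow_one]
  have F1 : (1 + t ^ β) ^ (-a)
      = (1 + t ^ β) ^ (-(a + 2)) * ((1 + t ^ β) * (1 + t ^ β)) := by
    conv_lhs => rw [show -a = -(a + 2) + (1 + 1) by ring, Real.rpow_add hT, Real.rpow_add hT, Real.rpow_one]
  have F3 : (1 + t ^ β) ^ (-(a + 1)) = (1 + t ^ β) ^ (-(a + 2)) * (1 + t ^ β) := by
    conv_lhs => rw [show -(a + 1) = -(a + 2) + 1 by ring, Real.rpow_add hT, Real.rpow_one]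
  -- RHS
  have hR : Gfun C p a β t ^ q
      = K * C * ((t ^ (p - 2) * (t ^ (β - 1) * t * t)) * (1 + t ^ β) ^ (-(a + 2))) := by
    unfold Gfun
    rw [Real.mul_rpow hCpos.le (by positivity), Real.mul_rpow (by positivity) (by positivity)]
    have c1 : C ^ q = K * C := by
      rw [hC, ← Real.rpow_mul hKpos.le,
        show ((d:ℝ) - 2) / 4 * q = 1 + ((d:ℝ) - 2) / 4 by rw [hq]; field_simp; ring,
        Real.rpow_add hKpos, Real.rpow_one]
    have c2 : (t ^ p) ^ q = t ^ (p - 2) * (t ^ (β - 1) * t * t) := by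
      rw [← Real.rpow_mul ht.le,
        show p * q = p + β - 1 by rw [hq, hp]; field_simp; ring, E5]
    have c3 : ((1 + t ^ β) ^ (-a)) ^ q = (1 + t ^ β) ^ (-(a + 2)) := by
      rw [← Real.rpow_mul hT.le,
        show -a * q = -(a + 2) by rw [hq, ha]; field_simp; ring]
    rw [c1, c2, c3]
  have hdiv : γ / t * Gfun C p a β t
      = γ * C * ((t ^ (p - 2) * t) * (1 + t ^ β) ^ (-a)) := by
    unfold Gfun
    rw [E2]; field_simp
  rw [hR, hdiv]
  unfold g1fun g2fun
  rw [E3, E4, E5, E6, F1, F3]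
  have Eβ : t ^ β = t ^ (β - 1) * t := by
    conv_lhs => rw [show β = (β - 1) + 1 by ring, Real.rpow_add ht, Real.rpow_one]
  rw [Eβ]
  generalize (1 + t ^ (β - 1) * t) ^ (-(a + 2)) = V
  generalize t ^ (p - 2) = X
  generalize t ^ (β - 1) = u
  subst hγ ha hp hK
  ring


/-- `W_γ` solves the static equation `-ΔW_γ + γ|x|⁻²W_γ = W_γ^{(d+2)/(d-2)}`
away from the origin. -/
theorem statement3 (d : ℕ) (hd : 3 ≤ d) (γ : ℝ)
    (hγ : -(((d : ℝ) - 2) ^ 2 / 4) < γ)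
    (β : ℝ) (hβ : β = Real.sqrt (1 + 4 * γ / ((d : ℝ) - 2) ^ 2))
    (Wγ : Ed d → ℝ)
    (hW : ∀ x : Ed d, Wγ x =
      ((d : ℝ) * ((d : ℝ) - 2) * β ^ 2) ^ (((d : ℝ) - 2) / 4) *
        (‖x‖ ^ (β - 1) / (1 + ‖x‖ ^ (2 * β))) ^ (((d : ℝ) - 2) / 2)) :
    ∀ x : Ed d, x ≠ 0 →
      -lapR Wγ x + γ / ‖x‖ ^ 2 * Wγ x = Wγ x ^ (((d : ℝ) + 2) / ((d : ℝ) - 2)) := by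
  have hd3 : (3:ℝ) ≤ (d:ℝ) := by exact_mod_cast hd
  have hd2 : (0:ℝ) < (d:ℝ) - 2 := by linarith
  have hd2' : ((d:ℝ)) - 2 ≠ 0 := ne_of_gt hd2
  have hnum : 0 < ((d:ℝ) - 2) ^ 2 + 4 * γ := by nlinarith
  have h1 : 0 < 1 + 4 * γ / ((d:ℝ) - 2) ^ 2 := by
    have : 1 + 4 * γ / ((d:ℝ) - 2) ^ 2 = (((d:ℝ) - 2) ^ 2 + 4 * γ) / ((d:ℝ) - 2) ^ 2 := by
      field_simp
    rw [this]; positivity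
  have hβpos : 0 < β := hβ ▸ Real.sqrt_pos.2 h1
  have hβ2 : β ^ 2 = 1 + 4 * γ / ((d:ℝ) - 2) ^ 2 := by
    rw [hβ, Real.sq_sqrt h1.le]
  have hγeq : γ = (β ^ 2 - 1) * ((d : ℝ) - 2) ^ 2 / 4 := by
    rw [hβ2]; field_simp; ring
  set a : ℝ := ((d : ℝ) - 2) / 2 with ha
  set p : ℝ := (β - 1) * ((d : ℝ) - 2) / 4 with hp
  set K : ℝ := (d : ℝ) * ((d : ℝ) - 2) * β ^ 2 with hK
  set C : ℝ := K ^ (((d : ℝ) - 2) / 4) with hC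
  have hWG : ∀ y : Ed d, y ≠ 0 → Wγ y = Gfun C p a β (‖y‖ ^ 2) := by
    intro y hy
    have hr : (0:ℝ) < ‖y‖ := norm_pos_iff.2 hy
    have h2β : (‖y‖ ^ 2 : ℝ) ^ β = ‖y‖ ^ (2 * β) := by
      rw [← Real.rpow_natCast ‖y‖ 2, ← Real.rpow_mul hr.le]
      norm_num
    have hden : (0:ℝ) < 1 + ‖y‖ ^ (2 * β) := by positivity
    rw [hW y]
    unfold Gfun
    rw [Real.div_rpow (by positivity) hden.le, h2β, div_eq_mul_inv,
      ← Real.rpow_neg hden.le]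
    congr 1
    rw [← Real.rpow_natCast ‖y‖ 2, ← Real.rpow_mul hr.le, ← Real.rpow_mul hr.le]
    congr 1
    push_cast
    rw [hp, ha]; ring
  intro x hx
  have hlap := radial_lapR (Gfun C p a β) (g1fun C p a β) (g2fun C p a β) Wγ hWG
    (fun t ht => hasDerivAt_Gfun C p a β t ht)
    (fun t ht => hasDerivAt_g1fun C p a β t ht) x hx
  have hxn : ‖x‖ ≠ 0 := by simpa using hx
  have ht : (0:ℝ) < ‖x‖ ^ 2 := by positivity
  rw [hlap, hWG x hx]
  exact ode_identity d hd γ β a p K C hβpos hγeq ha hp hK hC (‖x‖ ^ 2) ht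
end
end

section
/- Let d ≥ 3 be an integer and p ≥ 2. There exists a constant C = C(d,p) > 0 such that for every R > 0 and every radial f : ℝ^d → ℂ that is continuously differentiable with f ∈ L²(ℝ^d) and |∇f| ∈ L²(ℝ^d), one has ∫_{|x|≥R} |f(x)|^p dx ≤ C R^{−(d−1)(p−2)/2} (∫_{|x|≥R} |f|² dx)^{(p+2)/4} (∫_{|x|≥R} |∇f|² dx)^{(p−2)/4}. -/
noncomputable section

open MeasureTheory Complex
open scoped ENNReal NNReal

open Set in
theorem lintegral_polar₀ {E : Type*} [NormedAddCommGroup E] [NormedSpace ℝ E]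
    [MeasurableSpace E] [BorelSpace E] [FiniteDimensional ℝ E] [Nontrivial E]
    (μ : Measure E) [μ.IsAddHaarMeasure] {g : ℝ → ℝ≥0∞} (hg : Measurable g) :
    ∫⁻ x, g ‖x‖ ∂μ = (Module.finrank ℝ E) * μ (Metric.ball 0 1) *
      ∫⁻ y in Ioi (0:ℝ), ENNReal.ofReal (y ^ (Module.finrank ℝ E - 1)) * g y := by
  set n := Module.finrank ℝ E - 1 with hn
  have hmeas : Measurable (fun z : Metric.sphere (0:E) 1 × Ioi (0:ℝ) => g z.2.1) :=
    hg.comp (measurable_subtype_coe.comp measurable_snd)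
  have h1 : ∫⁻ x, g ‖x‖ ∂μ = ∫⁻ x : ({0}ᶜ : Set E), g ‖(x : E)‖ ∂(μ.comap (↑)) := by
    have := setLIntegral_subtype (μ := μ) (measurableSet_singleton (0:E)).compl univ
      (fun x => g ‖x‖)
    rw [Measure.restrict_univ] at this
    rw [this, image_univ, Subtype.range_coe, restrict_compl_singleton]
  have h2 : ∫⁻ x : ({0}ᶜ : Set E), g ‖(x : E)‖ ∂(μ.comap (↑)) =
      ∫⁻ z : Metric.sphere (0:E) 1 × Ioi (0:ℝ), g z.2.1
        ∂(μ.toSphere.prod (Measure.volumeIoiPow n)) := by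
    rw [← (μ.measurePreserving_homeomorphUnitSphereProd).lintegral_comp hmeas]
    exact lintegral_congr fun x => by simp
  have h3 : ∫⁻ z : Metric.sphere (0:E) 1 × Ioi (0:ℝ), g z.2.1
        ∂(μ.toSphere.prod (Measure.volumeIoiPow n)) =
      μ.toSphere univ * ∫⁻ y : Ioi (0:ℝ), g y.1 ∂(Measure.volumeIoiPow n) := by
    have h3' : ∫⁻ z : Metric.sphere (0:E) 1 × Ioi (0:ℝ), g z.2.1
          ∂(μ.toSphere.prod (Measure.volumeIoiPow n)) =
        ∫⁻ _ : Metric.sphere (0:E) 1, (∫⁻ y : Ioi (0:ℝ), g y.1 ∂(Measure.volumeIoiPow n))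
          ∂μ.toSphere :=
      lintegral_prod _ hmeas.aemeasurable
    rw [h3', lintegral_const, mul_comm]
  have h4 : ∫⁻ y : Ioi (0:ℝ), g y.1 ∂(Measure.volumeIoiPow n) =
      ∫⁻ y in Ioi (0:ℝ), ENNReal.ofReal (y ^ n) * g y ∂(volume : Measure ℝ) := by
    have h4' := lintegral_withDensity_eq_lintegral_mul (Measure.comap Subtype.val volume)
      (f := fun r : Ioi (0:ℝ) => ENNReal.ofReal (r.1 ^ n))
      ((measurable_subtype_coe.pow_const _).ennreal_ofReal)
      (g := fun y : Ioi (0:ℝ) => g y.1) (hg.comp measurable_subtype_coe)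
    have h4'' := setLIntegral_subtype (μ := (volume : Measure ℝ)) (s := Ioi (0:ℝ))
      measurableSet_Ioi univ (fun y : ℝ => ENNReal.ofReal (y ^ n) * g y)
    rw [Measure.restrict_univ, image_univ, Subtype.range_coe] at h4''
    rw [Measure.volumeIoiPow]
    exact h4'.trans h4''
  rw [h1, h2, h3, h4, Measure.toSphere_apply_univ, mul_assoc]

open Set in
theorem polar_S₀ {d : ℕ} (hd : 3 ≤ d) {R : ℝ} (hR : 0 < R) {w : ℝ → ℝ}
    (hw : Continuous w) :
    ∫⁻ x in {y : Ed d | R ≤ ‖y‖}, ENNReal.ofReal (w ‖x‖) =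
      ((d : ℝ≥0∞) * volume (Metric.ball (0 : Ed d) 1)) *
        ∫⁻ t in Ioi R, ENNReal.ofReal (t ^ (d - 1) * w t) := by
  haveI : NeZero d := ⟨by omega⟩
  haveI : Nontrivial (Ed d) := by
    refine ⟨0, EuclideanSpace.single ⟨0, by omega⟩ 1, fun hcon => ?_⟩
    have := congrArg norm hcon
    rw [norm_zero, EuclideanSpace.norm_single] at this
    norm_num at this
  have hS : MeasurableSet {y : Ed d | R ≤ ‖y‖} :=
    measurableSet_le measurable_const measurable_norm
  set g : ℝ → ℝ≥0∞ := (Ici R).indicator (fun t => ENNReal.ofReal (w t)) with hg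
  have hgmeas : Measurable g :=
    Measurable.indicator (hw.measurable.ennreal_ofReal) measurableSet_Ici
  have h1 : ∫⁻ x in {y : Ed d | R ≤ ‖y‖}, ENNReal.ofReal (w ‖x‖) = ∫⁻ x : Ed d, g ‖x‖ := by
    rw [← lintegral_indicator hS]
    refine lintegral_congr fun x => ?_
    by_cases hx : R ≤ ‖x‖
    · rw [Set.indicator_of_mem (by exact hx), hg, Set.indicator_of_mem (by exact hx)]
    · rw [Set.indicator_of_notMem (by exact hx), hg, Set.indicator_of_notMem (by exact hx)]
  rw [h1, lintegral_polar₀ volume hgmeas, finrank_euclideanSpace_fin]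
  congr 1
  have h2 : ∫⁻ y in Ioi (0:ℝ), ENNReal.ofReal (y ^ (d-1)) * g y =
      ∫⁻ y in Ioi (0:ℝ), (Ici R).indicator (fun t => ENNReal.ofReal (t ^ (d-1)) *
        ENNReal.ofReal (w t)) y := by
    refine lintegral_congr fun y => ?_
    by_cases hy : y ∈ Ici R
    · rw [hg, Set.indicator_of_mem hy, Set.indicator_of_mem hy]
    · rw [hg, Set.indicator_of_notMem hy, Set.indicator_of_notMem hy, mul_zero]
  rw [h2, lintegral_indicator measurableSet_Ici, Measure.restrict_restrict measurableSet_Ici]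
  have h3 : Ici R ∩ Ioi (0:ℝ) = Ici R := by
    apply inter_eq_left.2
    exact fun t ht => lt_of_lt_of_le hR ht
  rw [h3, ← setLIntegral_congr (Ioi_ae_eq_Ici (a := R))]
  refine setLIntegral_congr_fun measurableSet_Ioi (fun t ht => ?_)
  rw [ENNReal.ofReal_mul (pow_nonneg (le_of_lt (hR.trans ht)) _)]

open Set in
theorem strauss1D₀ {n : ℕ} {R : ℝ} (hR : 0 < R) (φ D : ℝ → ℂ)
    (hφ : ∀ t, HasDerivAt φ (D t) t) (hD : Continuous D)
    (hint1 : IntegrableOn (fun t => t ^ n * ‖φ t‖ ^ 2) (Ioi R))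
    (hint2 : IntegrableOn (fun t => t ^ n * ‖D t‖ ^ 2) (Ioi R))
    {r : ℝ} (hr : R ≤ r) :
    ‖φ r‖ ^ 2 ≤ 2 * (r ^ n)⁻¹ *
      (Real.sqrt (∫ t in Ioi R, t ^ n * ‖φ t‖ ^ 2) *
       Real.sqrt (∫ t in Ioi R, t ^ n * ‖D t‖ ^ 2)) := by
  have hr0 : 0 < r := lt_of_lt_of_le hR hr
  have hφc : Continuous φ := by
    rw [continuous_iff_continuousAt]; exact fun t => (hφ t).continuousAt
  set h : ℝ → ℝ := fun t => ‖φ t‖ ^ 2 with hh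
  have hhc : Continuous h := (hφc.norm).pow 2
  set h' : ℝ → ℝ := fun t => 2 * ((φ t).re * (D t).re + (φ t).im * (D t).im) with hh'
  have hrec : Continuous fun t => (φ t).re := Complex.continuous_re.comp hφc
  have himc : Continuous fun t => (φ t).im := Complex.continuous_im.comp hφc
  have hDrec : Continuous fun t => (D t).re := Complex.continuous_re.comp hD
  have hDimc : Continuous fun t => (D t).im := Complex.continuous_im.comp hD
  have hh'c : Continuous h' := by continuity
  have hnormsq : ∀ z : ℂ, ‖z‖ ^ 2 = z.re * z.re + z.im * z.im := by
    intro z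
    rw [← Complex.normSq_eq_norm_sq, Complex.normSq_apply]
  have hder : ∀ t, HasDerivAt h (h' t) t := by
    intro t
    have hre : HasDerivAt (fun t => (φ t).re) ((D t).re) t :=
      (Complex.reCLM.hasFDerivAt.comp_hasDerivAt t (hφ t))
    have him : HasDerivAt (fun t => (φ t).im) ((D t).im) t :=
      (Complex.imCLM.hasFDerivAt.comp_hasDerivAt t (hφ t))
    have := (hre.mul hre).add (him.mul him)
    have heq : h = fun t => (φ t).re * (φ t).re + (φ t).im * (φ t).im := by
      funext t; exact hnormsq (φ t)
    rw [heq]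
    convert this using 1
    · rfl
    · rfl
    · rfl
    · simp only [hh']
      ring
  have keybound : ∀ t, -(2 * (‖φ t‖ * ‖D t‖)) ≤ h' t := by
    intro t
    have habs : |(φ t).re * (D t).re + (φ t).im * (D t).im| ≤ ‖φ t‖ * ‖D t‖ := by
      rw [← Real.sqrt_sq_eq_abs]
      have h1 : ((φ t).re * (D t).re + (φ t).im * (D t).im) ^ 2 ≤
          ((φ t).re * (φ t).re + (φ t).im * (φ t).im) *
          ((D t).re * (D t).re + (D t).im * (D t).im) := by
        nlinarith [sq_nonneg ((φ t).re * (D t).im - (φ t).im * (D t).re)]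
      calc Real.sqrt (((φ t).re * (D t).re + (φ t).im * (D t).im) ^ 2)
          ≤ Real.sqrt (((φ t).re * (φ t).re + (φ t).im * (φ t).im) *
              ((D t).re * (D t).re + (D t).im * (D t).im)) := Real.sqrt_le_sqrt h1
        _ = ‖φ t‖ * ‖D t‖ := by
            rw [Real.sqrt_mul (by nlinarith [sq_nonneg (φ t).re, sq_nonneg (φ t).im])]
            rw [← hnormsq (φ t), ← hnormsq (D t)]
            rw [Real.sqrt_sq (norm_nonneg _), Real.sqrt_sq (norm_nonneg _)]
      -- done
    have := neg_abs_le ((φ t).re * (D t).re + (φ t).im * (D t).im)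
    simp only [hh']
    nlinarith [habs, this]
  -- integrals over Ioi R
  set A := ∫ t in Ioi R, t ^ n * ‖φ t‖ ^ 2 with hA
  set B := ∫ t in Ioi R, t ^ n * ‖D t‖ ^ 2 with hB
  have hA0 : 0 ≤ A := setIntegral_nonneg measurableSet_Ioi fun t ht =>
    mul_nonneg (pow_nonneg (le_of_lt (hR.trans ht)) n) (by positivity)
  have hB0 : 0 ≤ B := setIntegral_nonneg measurableSet_Ioi fun t ht =>
    mul_nonneg (pow_nonneg (le_of_lt (hR.trans ht)) n) (by positivity)
  -- step 1 : escape to small values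
  have step1 : ∀ ε > (0:ℝ), ∀ S : ℝ, ∃ s, max S 1 ≤ s ∧ h s < ε := by
    intro ε hε S
    by_contra hcon
    push_neg at hcon
    set S₀ := max (max S 1) R with hS₀
    have hsub : Ioi S₀ ⊆ Ioi R := Ioi_subset_Ioi (le_max_right _ _)
    have hint' : IntegrableOn (fun t => t ^ n * ‖φ t‖ ^ 2) (Ioi S₀) := hint1.mono_set hsub
    have hconst : IntegrableOn (fun _ => ε) (Ioi S₀) := by
      apply Integrable.mono' hint' aestronglyMeasurable_const
      refine (ae_restrict_iff' measurableSet_Ioi).2 (Filter.Eventually.of_forall fun t ht => ?_)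
      have h1t : (1:ℝ) ≤ t := le_trans (le_trans (le_max_right S 1) (le_max_left _ R)) ht.le
      have h2 : ε ≤ h t := hcon t (le_trans (le_max_left _ R) ht.le)
      have h3 : h t ≤ t ^ n * ‖φ t‖ ^ 2 :=
        le_mul_of_one_le_left (by positivity) (one_le_pow₀ h1t)
      rw [Real.norm_eq_abs, abs_of_pos hε]
      exact le_trans h2 h3
    have := integrable_const_iff.1 hconst
    rcases this with hc | hc
    · exact absurd hc (ne_of_gt hε)
    · rw [isFiniteMeasure_restrict, Real.volume_Ioi] at hc
      exact hc rfl
  -- step 2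
  refine le_of_forall_pos_le_add fun ε hε => ?_
  obtain ⟨s, hs1, hs2⟩ := step1 ε hε r
  have hrs : r ≤ s := le_trans (le_max_left _ _) hs1
  -- FTC
  have hftc : ∫ t in r..s, h' t = h s - h r :=
    intervalIntegral.integral_eq_sub_of_hasDerivAt (fun t _ => hder t)
      (hh'c.intervalIntegrable r s)
  have hmono : ∫ t in r..s, (-(2 * (‖φ t‖ * ‖D t‖))) ≤ ∫ t in r..s, h' t := by
    apply intervalIntegral.integral_mono_on hrs
      ((continuous_const.mul ((hφc.norm).mul (hD.norm))).neg.intervalIntegrable r s)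
      (hh'c.intervalIntegrable r s)
    exact fun t _ => keybound t
  rw [intervalIntegral.integral_neg] at hmono
  -- so : h r ≤ h s + ∫ 2‖φ‖‖D‖
  have key1 : h r ≤ h s + ∫ t in r..s, 2 * (‖φ t‖ * ‖D t‖) := by
    have := hftc
    linarith [hmono, hftc.ge, hftc.le]
  -- weight
  have key2 : ∫ t in r..s, 2 * (‖φ t‖ * ‖D t‖) ≤
      2 * (r ^ n)⁻¹ * ∫ t in r..s, t ^ n * (‖φ t‖ * ‖D t‖) := by
    have hptw : ∀ t ∈ Icc r s, 2 * (‖φ t‖ * ‖D t‖) ≤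
        2 * (r ^ n)⁻¹ * (t ^ n * (‖φ t‖ * ‖D t‖)) := by
      intro t ht
      have h1 : r ^ n ≤ t ^ n := pow_le_pow_left₀ hr0.le ht.1 n
      have h2 : (1:ℝ) ≤ (r ^ n)⁻¹ * t ^ n := by
        rw [← div_eq_inv_mul, le_div_iff₀ (by positivity)]
        simpa using h1
      have h3 : 0 ≤ ‖φ t‖ * ‖D t‖ := by positivity
      nlinarith
    calc ∫ t in r..s, 2 * (‖φ t‖ * ‖D t‖)
        ≤ ∫ t in r..s, 2 * (r ^ n)⁻¹ * (t ^ n * (‖φ t‖ * ‖D t‖)) := by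
          apply intervalIntegral.integral_mono_on hrs
            ((continuous_const.mul ((hφc.norm).mul (hD.norm))).intervalIntegrable r s)
            ((continuous_const.mul ((continuous_pow n).mul
              ((hφc.norm).mul (hD.norm)))).intervalIntegrable r s) hptw
      _ = 2 * (r ^ n)⁻¹ * ∫ t in r..s, t ^ n * (‖φ t‖ * ‖D t‖) := by
          rw [← intervalIntegral.integral_const_mul]
  -- Cauchy-Schwarz
  have key3 : ∫ t in r..s, t ^ n * (‖φ t‖ * ‖D t‖) ≤ Real.sqrt A * Real.sqrt B := by
    rw [intervalIntegral.integral_of_le hrs]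
    set u : ℝ → ℝ := fun t => Real.sqrt (t ^ n) * ‖φ t‖ with hu
    set v : ℝ → ℝ := fun t => Real.sqrt (t ^ n) * ‖D t‖ with hv
    have huc : Continuous u := ((continuous_pow n).sqrt).mul hφc.norm
    have hvc : Continuous v := ((continuous_pow n).sqrt).mul hD.norm
    have hcongr : ∫ t in Ioc r s, t ^ n * (‖φ t‖ * ‖D t‖) = ∫ t in Ioc r s, u t * v t := by
      apply setIntegral_congr_fun measurableSet_Ioc
      intro t ht
      have ht0 : (0:ℝ) ≤ t := le_trans hr0.le ht.1.le
      simp only [hu, hv]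
      rw [show Real.sqrt (t ^ n) * ‖φ t‖ * (Real.sqrt (t ^ n) * ‖D t‖)
          = (Real.sqrt (t ^ n) * Real.sqrt (t ^ n)) * (‖φ t‖ * ‖D t‖) by ring,
        Real.mul_self_sqrt (pow_nonneg ht0 n)]
    rw [hcongr]
    have hconj : Real.HolderConjugate 2 2 := Real.HolderConjugate.two_two
    have h2eq : ENNReal.ofReal (2:ℝ) = 2 := by norm_num
    have hmemu : MemLp u (ENNReal.ofReal (2:ℝ)) (volume.restrict (Ioc r s)) := by
      rw [h2eq]
      refine (memLp_two_iff_integrable_sq huc.aestronglyMeasurable).2 ?_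
      exact (huc.pow 2).integrableOn_Ioc
    have hmemv : MemLp v (ENNReal.ofReal (2:ℝ)) (volume.restrict (Ioc r s)) := by
      rw [h2eq]
      refine (memLp_two_iff_integrable_sq hvc.aestronglyMeasurable).2 ?_
      exact (hvc.pow 2).integrableOn_Ioc
    have hCS := MeasureTheory.integral_mul_le_Lp_mul_Lq_of_nonneg hconj
      (Filter.Eventually.of_forall fun t => by positivity)
      (Filter.Eventually.of_forall fun t => by positivity) hmemu hmemv
    refine le_trans hCS ?_
    have hsq : ∀ w : ℝ → ℝ, (∀ t, 0 ≤ w t) → ∀ t:ℝ, w t ^ (2:ℝ) = w t ^ 2 := by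
      intro w hw t
      rw [show (2:ℝ) = ((2:ℕ):ℝ) by norm_num, Real.rpow_natCast]
    have hu2 : ∫ t in Ioc r s, u t ^ (2:ℝ) = ∫ t in Ioc r s, t ^ n * ‖φ t‖ ^ 2 := by
      apply setIntegral_congr_fun measurableSet_Ioc
      intro t ht
      have ht0 : (0:ℝ) ≤ t := le_trans hr0.le ht.1.le
      show u t ^ (2:ℝ) = t ^ n * ‖φ t‖ ^ 2
      rw [hsq u (fun t => by positivity), hu]
      simp only
      rw [mul_pow, Real.sq_sqrt (pow_nonneg ht0 n)]
    have hv2 : ∫ t in Ioc r s, v t ^ (2:ℝ) = ∫ t in Ioc r s, t ^ n * ‖D t‖ ^ 2 := by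
      apply setIntegral_congr_fun measurableSet_Ioc
      intro t ht
      have ht0 : (0:ℝ) ≤ t := le_trans hr0.le ht.1.le
      show v t ^ (2:ℝ) = t ^ n * ‖D t‖ ^ 2
      rw [hsq v (fun t => by positivity), hv]
      simp only
      rw [mul_pow, Real.sq_sqrt (pow_nonneg ht0 n)]
    have hsub : Ioc r s ⊆ Ioi R := fun t ht => lt_of_le_of_lt hr ht.1
    have hmono1 : ∫ t in Ioc r s, t ^ n * ‖φ t‖ ^ 2 ≤ A := by
      apply setIntegral_mono_set hint1
      · refine (ae_restrict_iff' measurableSet_Ioi).2 (Filter.Eventually.of_forall fun t ht => ?_)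
        exact mul_nonneg (pow_nonneg (le_of_lt (hR.trans ht)) n) (by positivity)
      · exact Filter.Eventually.of_forall hsub
    have hmono2 : ∫ t in Ioc r s, t ^ n * ‖D t‖ ^ 2 ≤ B := by
      apply setIntegral_mono_set hint2
      · refine (ae_restrict_iff' measurableSet_Ioi).2 (Filter.Eventually.of_forall fun t ht => ?_)
        exact mul_nonneg (pow_nonneg (le_of_lt (hR.trans ht)) n) (by positivity)
      · exact Filter.Eventually.of_forall hsub
    have hi0u : 0 ≤ ∫ t in Ioc r s, u t ^ (2:ℝ) := by
      apply setIntegral_nonneg measurableSet_Ioc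
      intro t ht
      exact Real.rpow_nonneg (by positivity) _
    have hi0v : 0 ≤ ∫ t in Ioc r s, v t ^ (2:ℝ) := by
      apply setIntegral_nonneg measurableSet_Ioc
      intro t ht
      exact Real.rpow_nonneg (by positivity) _
    have e1 : (∫ t in Ioc r s, u t ^ (2:ℝ)) ^ ((1:ℝ)/2) ≤ Real.sqrt A := by
      rw [← Real.sqrt_eq_rpow, hu2]
      exact Real.sqrt_le_sqrt hmono1
    have e2 : (∫ t in Ioc r s, v t ^ (2:ℝ)) ^ ((1:ℝ)/2) ≤ Real.sqrt B := by
      rw [← Real.sqrt_eq_rpow, hv2]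
      exact Real.sqrt_le_sqrt hmono2
    refine mul_le_mul e1 e2 ?_ (Real.sqrt_nonneg _)
    exact Real.rpow_nonneg hi0v _
  -- combine
  have hrn : (0:ℝ) ≤ 2 * (r ^ n)⁻¹ := by positivity
  have key3' : 2 * (r ^ n)⁻¹ * ∫ t in r..s, t ^ n * (‖φ t‖ * ‖D t‖) ≤
      2 * (r ^ n)⁻¹ * (Real.sqrt A * Real.sqrt B) := mul_le_mul_of_nonneg_left key3 hrn
  have hhr : h r = ‖φ r‖ ^ 2 := rfl
  linarith [key1, key2, key3', hs2.le, hhr.ge, hhr.le]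

open Set in
theorem algebra_step₀ {c R A B p : ℝ} {d : ℕ} (hc : 0 < c) (hR : 0 < R)
    (hA : 0 ≤ A) (hB : 0 ≤ B) (hp : 2 ≤ p) (hd : 3 ≤ d) :
    (2 / c * (R ^ (d-1))⁻¹ * (Real.sqrt A * Real.sqrt B)) ^ ((p - 2) / 2) * A =
      (2 / c) ^ ((p - 2) / 2) * R ^ (-(((d : ℝ) - 1) * (p - 2)) / 2) *
        A ^ ((p + 2) / 4) * B ^ ((p - 2) / 4) := by
  have h2c : (0:ℝ) ≤ 2 / c := by positivity
  have hq : (0:ℝ) ≤ (p - 2) / 2 := by linarith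
  have hRn : (0:ℝ) ≤ (R ^ (d-1))⁻¹ := by positivity
  rw [Real.mul_rpow (mul_nonneg h2c hRn) (mul_nonneg (Real.sqrt_nonneg A) (Real.sqrt_nonneg B)),
    Real.mul_rpow h2c hRn,
    Real.mul_rpow (Real.sqrt_nonneg A) (Real.sqrt_nonneg B)]
  have e1 : ((R ^ (d-1))⁻¹ : ℝ) ^ ((p - 2) / 2) = R ^ (-(((d : ℝ) - 1) * (p - 2)) / 2) := by
    rw [← Real.rpow_natCast R (d-1), ← Real.rpow_neg hR.le, ← Real.rpow_mul hR.le]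
    congr 1
    have : ((d - 1 : ℕ) : ℝ) = (d : ℝ) - 1 := by
      rw [Nat.cast_sub (by omega), Nat.cast_one]
    rw [this]; ring
  have e2 : Real.sqrt A ^ ((p - 2) / 2) = A ^ ((p - 2) / 4) := by
    rw [Real.sqrt_eq_rpow, ← Real.rpow_mul hA]
    congr 1; ring
  have e3 : Real.sqrt B ^ ((p - 2) / 2) = B ^ ((p - 2) / 4) := by
    rw [Real.sqrt_eq_rpow, ← Real.rpow_mul hB]
    congr 1; ring
  have e4 : A ^ ((p - 2) / 4) * A = A ^ ((p + 2) / 4) := by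
    have : (p + 2) / 4 = (p - 2) / 4 + 1 := by ring
    rw [this, Real.rpow_add' hA (by intro hcon; nlinarith), Real.rpow_one]
  rw [e1, e2, e3]
  rw [show (2 / c) ^ ((p - 2) / 2) * R ^ (-(((d : ℝ) - 1) * (p - 2)) / 2) *
      (A ^ ((p - 2) / 4) * B ^ ((p - 2) / 4)) * A
      = (2 / c) ^ ((p - 2) / 2) * R ^ (-(((d : ℝ) - 1) * (p - 2)) / 2) *
      (A ^ ((p - 2) / 4) * A) * B ^ ((p - 2) / 4) by ring, e4]


set_option maxHeartbeats 2000000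

/-- the radial Sobolev inequality on exterior regions. -/
theorem statement4 (d : ℕ) (hd : 3 ≤ d) (p : ℝ) (hp : 2 ≤ p) :
    ∃ C > (0 : ℝ), ∀ R > (0 : ℝ), ∀ f : Ed d → ℂ, IsRadial f → ContDiff ℝ 1 f →
      Integrable (fun x => ‖f x‖ ^ 2) → Integrable (fun x => gradNormSq f x) →
      (∫ x in {y : Ed d | R ≤ ‖y‖}, ‖f x‖ ^ p) ≤
        C * R ^ (-(((d : ℝ) - 1) * (p - 2)) / 2) *
          (∫ x in {y : Ed d | R ≤ ‖y‖}, ‖f x‖ ^ 2) ^ ((p + 2) / 4) *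
          (∫ x in {y : Ed d | R ≤ ‖y‖}, gradNormSq f x) ^ ((p - 2) / 4) := by
  classical
  haveI : NeZero d := ⟨by omega⟩
  set c' : ℝ≥0∞ := (d : ℝ≥0∞) * volume (Metric.ball (0 : Ed d) 1) with hc'
  have hballpos : 0 < volume (Metric.ball (0 : Ed d) 1) :=
    Metric.measure_ball_pos _ _ one_pos
  have hballtop : volume (Metric.ball (0 : Ed d) 1) < ⊤ := measure_ball_lt_top
  have hc'0 : c' ≠ 0 := by
    refine mul_ne_zero ?_ hballpos.ne'
    simp only [ne_eq, Nat.cast_eq_zero]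
    omega
  have hc'top : c' ≠ ⊤ := ENNReal.mul_ne_top (ENNReal.natCast_ne_top d) hballtop.ne
  set c : ℝ := c'.toReal with hcdef
  have hc0 : 0 < c := ENNReal.toReal_pos hc'0 hc'top
  refine ⟨(2 / c) ^ ((p - 2) / 2), Real.rpow_pos_of_pos (by positivity) _, ?_⟩
  intro R hR f hrad hf hfL2 hgrad
  set S := {y : Ed d | R ≤ ‖y‖} with hSdef
  have hS : MeasurableSet S := measurableSet_le measurable_const measurable_norm
  have hmemS : ∀ x : Ed d, x ∈ S ↔ R ≤ ‖x‖ := fun x => Iff.rfl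
  have hSne0 : ∀ x : Ed d, x ∈ S → x ≠ 0 := by
    intro x hx h0
    have h1 : R ≤ ‖(0 : Ed d)‖ := by rw [← h0]; exact hx
    rw [norm_zero] at h1
    linarith
  have hdiff : Differentiable ℝ f := hf.differentiable one_ne_zero
  set i0 : Fin d := ⟨0, by omega⟩ with hi0
  set e₁ : Ed d := EuclideanSpace.single i0 1 with he₁
  have hnorme₁ : ‖e₁‖ = 1 := by rw [he₁, EuclideanSpace.norm_single]; norm_num
  set φ : ℝ → ℂ := fun t => f (t • e₁) with hφdef
  set D : ℝ → ℂ := fun t => fderiv ℝ f (t • e₁) e₁ with hDdef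
  have hφd : ∀ t, HasDerivAt φ (D t) t := by
    intro t
    have h1 : HasDerivAt (fun s : ℝ => s • e₁) ((1:ℝ) • e₁) t := (hasDerivAt_id t).smul_const e₁
    have := (hdiff (t • e₁)).hasFDerivAt.comp_hasDerivAt t h1
    rw [one_smul] at this
    exact this
  have hφc : Continuous φ := hf.continuous.comp (continuous_id.smul continuous_const)
  have hDc : Continuous D := by
    have h1 : Continuous fun t : ℝ => fderiv ℝ f (t • e₁) :=
      (hf.continuous_fderiv one_ne_zero).comp (continuous_id.smul continuous_const)
    exact h1.clm_apply continuous_const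
  have hfφ : ∀ x : Ed d, f x = φ ‖x‖ := by
    intro x
    apply hrad
    rw [norm_smul, hnorme₁, mul_one, Real.norm_eq_abs, _root_.abs_of_nonneg (norm_nonneg x)]
  have hgnsq_cont : Continuous fun x : Ed d => gradNormSq f x := by
    apply continuous_finset_sum
    intro i _
    exact ((hf.continuous_fderiv one_ne_zero).clm_apply continuous_const).norm.pow 2
  have hgnsq0 : ∀ x, 0 ≤ gradNormSq f x := fun x =>
    Finset.sum_nonneg fun i _ => by positivity
  -- pointwise gradient bound
  have hgradpt : ∀ x : Ed d, x ≠ 0 → ‖D ‖x‖‖ ^ 2 ≤ gradNormSq f x := by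
    intro x hx
    have hxn : 0 < ‖x‖ := norm_pos_iff.2 hx
    set u : Ed d := ‖x‖⁻¹ • x with hu'
    have hu : ‖u‖ = 1 := by
      rw [hu', norm_smul, norm_inv, Real.norm_eq_abs, _root_.abs_of_nonneg (norm_nonneg x),
        inv_mul_cancel₀ hxn.ne']
    have hru : ‖x‖ • u = x := smul_inv_smul₀ hxn.ne' x
    have hψ : HasDerivAt (fun s : ℝ => f (s • u)) (fderiv ℝ f x u) ‖x‖ := by
      have h1 : HasDerivAt (fun s : ℝ => s • u) ((1:ℝ) • u) ‖x‖ := (hasDerivAt_id _).smul_const u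
      have h2 : HasFDerivAt f (fderiv ℝ f x) ((fun s : ℝ => s • u) ‖x‖) := by
        simpa [hru] using (hdiff x).hasFDerivAt
      have := h2.comp_hasDerivAt ‖x‖ h1
      rw [one_smul] at this
      exact this
    have heq : φ =ᶠ[nhds ‖x‖] (fun s : ℝ => f (s • u)) := by
      filter_upwards [Ioi_mem_nhds hxn] with s hs
      have hs0 : (0:ℝ) < s := hs
      apply hrad
      rw [norm_smul, norm_smul, hu, hnorme₁]
    have hφx : HasDerivAt φ (fderiv ℝ f x u) ‖x‖ := hψ.congr_of_eventuallyEq heq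
    have hDx : D ‖x‖ = fderiv ℝ f x u := (hφd ‖x‖).unique hφx
    rw [hDx]
    have hsum : u = ∑ i, u i • EuclideanSpace.single i (1:ℝ) := by
      have hb := (EuclideanSpace.basisFun (Fin d) ℝ).sum_repr u
      simp only [EuclideanSpace.basisFun_repr, EuclideanSpace.basisFun_apply] at hb
      exact hb.symm
    have hLsum : fderiv ℝ f x u = ∑ i, u i • grad f x i := by
      conv_lhs => rw [hsum]
      rw [map_sum]
      refine Finset.sum_congr rfl fun i _ => ?_
      rw [ContinuousLinearMap.map_smul]
      rfl
    rw [hLsum]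
    have hsumu : ∑ i, u i ^ 2 = 1 := by
      have h1 : ‖u‖ = Real.sqrt (∑ i, ‖u i‖ ^ 2) := EuclideanSpace.norm_eq u
      have h3 : ∑ i, ‖u i‖ ^ 2 = ∑ i, u i ^ 2 :=
        Finset.sum_congr rfl fun i _ => by rw [Real.norm_eq_abs, _root_.sq_abs]
      have h4 : (0:ℝ) ≤ ∑ i, u i ^ 2 := Finset.sum_nonneg fun i _ => sq_nonneg _
      have h5 : Real.sqrt (∑ i, u i ^ 2) = 1 := by rw [← h3, ← h1, hu]
      calc ∑ i, u i ^ 2 = Real.sqrt (∑ i, u i ^ 2) ^ 2 := (Real.sq_sqrt h4).symm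
        _ = 1 := by rw [h5]; norm_num
    calc ‖∑ i, u i • grad f x i‖ ^ 2
        ≤ (∑ i, ‖u i • grad f x i‖) ^ 2 := by
          apply pow_le_pow_left₀ (norm_nonneg _) (norm_sum_le _ _)
      _ = (∑ i, |u i| * ‖grad f x i‖) ^ 2 := by
          congr 1
          refine Finset.sum_congr rfl fun i _ => ?_
          rw [norm_smul, Real.norm_eq_abs]
      _ ≤ (∑ i, |u i| ^ 2) * (∑ i, ‖grad f x i‖ ^ 2) :=
          Finset.sum_mul_sq_le_sq_mul_sq _ _ _
      _ = gradNormSq f x := by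
          have : ∑ i, |u i| ^ 2 = ∑ i, u i ^ 2 := by
            refine Finset.sum_congr rfl fun i _ => sq_abs _
          rw [this, hsumu, one_mul]
          rfl
  -- polar identities
  have hwA : Continuous fun t : ℝ => ‖φ t‖ ^ 2 := hφc.norm.pow 2
  have hwB : Continuous fun t : ℝ => ‖D t‖ ^ 2 := hDc.norm.pow 2
  have hPA : ∫⁻ x in S, ENNReal.ofReal (‖f x‖ ^ 2) =
      c' * ∫⁻ t in Set.Ioi R, ENNReal.ofReal (t ^ (d-1) * ‖φ t‖ ^ 2) := by
    have h0 : ∫⁻ x in S, ENNReal.ofReal (‖f x‖ ^ 2) =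
        ∫⁻ x in S, ENNReal.ofReal (‖φ ‖x‖‖ ^ 2) :=
      lintegral_congr fun x => by rw [hfφ x]
    rw [h0]
    exact polar_S₀ hd hR hwA
  have hPB : ∫⁻ x in S, ENNReal.ofReal (‖D ‖x‖‖ ^ 2) =
      c' * ∫⁻ t in Set.Ioi R, ENNReal.ofReal (t ^ (d-1) * ‖D t‖ ^ 2) :=
    polar_S₀ hd hR hwB
  -- finiteness
  have hfinA : ∫⁻ x in S, ENNReal.ofReal (‖f x‖ ^ 2) < ⊤ :=
    lt_of_le_of_lt (setLIntegral_le_lintegral _ _) hfL2.lintegral_lt_top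
  have hIA : ∫⁻ t in Set.Ioi R, ENNReal.ofReal (t ^ (d-1) * ‖φ t‖ ^ 2) < ⊤ :=
    ENNReal.lt_top_of_mul_ne_top_right (by rw [← hPA]; exact hfinA.ne) hc'0
  have hfinG : ∫⁻ x in S, ENNReal.ofReal (gradNormSq f x) < ⊤ :=
    lt_of_le_of_lt (setLIntegral_le_lintegral _ _) hgrad.lintegral_lt_top
  have hDleS : ∀ x ∈ S, ENNReal.ofReal (‖D ‖x‖‖ ^ 2) ≤ ENNReal.ofReal (gradNormSq f x) :=
    fun x hx => ENNReal.ofReal_le_ofReal (hgradpt x (hSne0 x hx))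
  have hfinB : ∫⁻ x in S, ENNReal.ofReal (‖D ‖x‖‖ ^ 2) < ⊤ :=
    lt_of_le_of_lt (setLIntegral_mono hgnsq_cont.measurable.ennreal_ofReal hDleS) hfinG
  have hIB : ∫⁻ t in Set.Ioi R, ENNReal.ofReal (t ^ (d-1) * ‖D t‖ ^ 2) < ⊤ :=
    ENNReal.lt_top_of_mul_ne_top_right (by rw [← hPB]; exact hfinB.ne) hc'0
  -- real integrability on Ioi R
  have haeA : 0 ≤ᵐ[volume.restrict (Set.Ioi R)] fun t => t ^ (d-1) * ‖φ t‖ ^ 2 := by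
    refine (ae_restrict_iff' measurableSet_Ioi).2 (Filter.Eventually.of_forall fun t ht => ?_)
    exact mul_nonneg (pow_nonneg (le_of_lt (hR.trans ht)) _) (by positivity)
  have haeB : 0 ≤ᵐ[volume.restrict (Set.Ioi R)] fun t => t ^ (d-1) * ‖D t‖ ^ 2 := by
    refine (ae_restrict_iff' measurableSet_Ioi).2 (Filter.Eventually.of_forall fun t ht => ?_)
    exact mul_nonneg (pow_nonneg (le_of_lt (hR.trans ht)) _) (by positivity)
  have hintA : IntegrableOn (fun t => t ^ (d-1) * ‖φ t‖ ^ 2) (Set.Ioi R) :=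
    ⟨((continuous_pow (d-1)).mul hwA).aestronglyMeasurable.restrict,
      (hasFiniteIntegral_iff_ofReal haeA).2 hIA⟩
  have hintB : IntegrableOn (fun t => t ^ (d-1) * ‖D t‖ ^ 2) (Set.Ioi R) :=
    ⟨((continuous_pow (d-1)).mul hwB).aestronglyMeasurable.restrict,
      (hasFiniteIntegral_iff_ofReal haeB).2 hIB⟩
  -- the four real quantities
  set At := ∫ t in Set.Ioi R, t ^ (d-1) * ‖φ t‖ ^ 2 with hAtdef
  set Bt := ∫ t in Set.Ioi R, t ^ (d-1) * ‖D t‖ ^ 2 with hBtdef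
  set A := ∫ x in S, ‖f x‖ ^ 2 with hAdef
  set B := ∫ x in S, gradNormSq f x with hBdef
  have hAt0 : 0 ≤ At := integral_nonneg_of_ae haeA
  have hBt0 : 0 ≤ Bt := integral_nonneg_of_ae haeB
  have hA0 : 0 ≤ A := setIntegral_nonneg hS fun x _ => by positivity
  have hB0 : 0 ≤ B := setIntegral_nonneg hS fun x _ => hgnsq0 x
  have hAtval : At = (∫⁻ t in Set.Ioi R, ENNReal.ofReal (t ^ (d-1) * ‖φ t‖ ^ 2)).toReal := by
    rw [hAtdef, integral_eq_lintegral_of_nonneg_ae haeA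
      ((continuous_pow (d-1)).mul hwA).aestronglyMeasurable.restrict]
  have hBtval : Bt = (∫⁻ t in Set.Ioi R, ENNReal.ofReal (t ^ (d-1) * ‖D t‖ ^ 2)).toReal := by
    rw [hBtdef, integral_eq_lintegral_of_nonneg_ae haeB
      ((continuous_pow (d-1)).mul hwB).aestronglyMeasurable.restrict]
  have hAval : A = c * At := by
    rw [hAdef, integral_eq_lintegral_of_nonneg_ae
      (Filter.Eventually.of_forall fun x => by positivity)
      (hfL2.aestronglyMeasurable.restrict),
      hPA, ENNReal.toReal_mul, ← hcdef, hAtval]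
  have hBval : c * Bt ≤ B := by
    have h1 : B = (∫⁻ x in S, ENNReal.ofReal (gradNormSq f x)).toReal := by
      rw [hBdef, integral_eq_lintegral_of_nonneg_ae
        (Filter.Eventually.of_forall fun x => hgnsq0 x)
        (hgnsq_cont.aestronglyMeasurable.restrict)]
    have h2 : (∫⁻ x in S, ENNReal.ofReal (‖D ‖x‖‖ ^ 2)).toReal ≤
        (∫⁻ x in S, ENNReal.ofReal (gradNormSq f x)).toReal :=
      ENNReal.toReal_mono hfinG.ne
        (setLIntegral_mono hgnsq_cont.measurable.ennreal_ofReal hDleS)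
    rw [h1]
    refine le_trans (le_of_eq ?_) h2
    rw [hPB, ENNReal.toReal_mul, ← hcdef, hBtval]
  -- the pointwise Strauss bound on S
  set K : ℝ := 2 / c * (R ^ (d-1))⁻¹ * (Real.sqrt A * Real.sqrt B) with hKdef
  have hK0 : 0 ≤ K := by positivity
  have hK : ∀ x ∈ S, ‖f x‖ ^ 2 ≤ K := by
    intro x hx
    have hxR : R ≤ ‖x‖ := hx
    rw [hfφ x]
    have h1 := strauss1D₀ hR φ D hφd hDc hintA hintB hxR
    refine le_trans h1 ?_
    have hx0 : 0 < ‖x‖ := lt_of_lt_of_le hR hxR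
    have hrn : (‖x‖ ^ (d-1))⁻¹ ≤ (R ^ (d-1))⁻¹ := by
      apply inv_anti₀ (by positivity)
      exact pow_le_pow_left₀ hR.le hxR _
    have hsq : Real.sqrt At * Real.sqrt Bt ≤ Real.sqrt A * Real.sqrt B / c := by
      have hAt : At = A / c := by rw [hAval]; field_simp
      have hBt : Bt ≤ B / c := by
        rw [le_div_iff₀ hc0, mul_comm]
        exact hBval
      have e1 : Real.sqrt At = Real.sqrt A / Real.sqrt c := by
        rw [hAt, Real.sqrt_div hA0]
      have e2 : Real.sqrt Bt ≤ Real.sqrt B / Real.sqrt c := by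
        rw [← Real.sqrt_div hB0]
        exact Real.sqrt_le_sqrt hBt
      have e3 : Real.sqrt A / Real.sqrt c * (Real.sqrt B / Real.sqrt c) =
          Real.sqrt A * Real.sqrt B / c := by
        rw [div_mul_div_comm, Real.mul_self_sqrt hc0.le]
      rw [e1, ← e3]
      apply mul_le_mul_of_nonneg_left e2 (by positivity)
    calc 2 * (‖x‖ ^ (d-1))⁻¹ * (Real.sqrt At * Real.sqrt Bt)
        ≤ 2 * (R ^ (d-1))⁻¹ * (Real.sqrt A * Real.sqrt B / c) := by
          apply mul_le_mul (by nlinarith [hrn]) hsq (by positivity) (by positivity)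
      _ = K := by rw [hKdef]; ring
  -- pointwise p-power bound
  have hptw : ∀ x ∈ S, ‖f x‖ ^ p ≤ K ^ ((p-2)/2) * ‖f x‖ ^ 2 := by
    intro x hx
    have ha0 : (0:ℝ) ≤ ‖f x‖ := norm_nonneg _
    by_cases haz : ‖f x‖ = 0
    · rw [haz, Real.zero_rpow (by linarith : p ≠ 0)]
      have : (0:ℝ) ^ 2 = 0 := by norm_num
      rw [this, mul_zero]
    · have hapos : 0 < ‖f x‖ := lt_of_le_of_ne ha0 (Ne.symm haz)
      have hsplit : (‖f x‖ ^ 2) ^ ((p-2)/2) * ‖f x‖ ^ 2 = ‖f x‖ ^ p := by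
        calc (‖f x‖ ^ 2) ^ ((p-2)/2) * ‖f x‖ ^ 2
            = (‖f x‖ ^ ((2:ℕ):ℝ)) ^ ((p-2)/2) * ‖f x‖ ^ ((2:ℕ):ℝ) := by
              rw [Real.rpow_natCast]
          _ = ‖f x‖ ^ (((2:ℕ):ℝ) * ((p-2)/2)) * ‖f x‖ ^ ((2:ℕ):ℝ) := by
              rw [← Real.rpow_mul ha0]
          _ = ‖f x‖ ^ (((2:ℕ):ℝ) * ((p-2)/2) + ((2:ℕ):ℝ)) := by
              rw [← Real.rpow_add hapos]
          _ = ‖f x‖ ^ p := by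
              congr 1
              push_cast
              ring
      rw [← hsplit]
      apply mul_le_mul_of_nonneg_right _ (by positivity)
      exact Real.rpow_le_rpow (by positivity) (hK x hx) (by linarith)
  -- integrability of the p-th power on S
  have hmeasp : AEStronglyMeasurable (fun x : Ed d => ‖f x‖ ^ p) (volume.restrict S) :=
    (hf.continuous.norm.rpow_const fun x => Or.inr (by linarith)).aestronglyMeasurable.restrict
  have hintS2 : IntegrableOn (fun x : Ed d => ‖f x‖ ^ 2) S := hfL2.integrableOn
  have hintp : IntegrableOn (fun x : Ed d => ‖f x‖ ^ p) S := by
    apply Integrable.mono' (hintS2.const_mul (K ^ ((p-2)/2))) hmeasp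
    refine (ae_restrict_iff' hS).2 (Filter.Eventually.of_forall fun x hx => ?_)
    rw [Real.norm_eq_abs, _root_.abs_of_nonneg (Real.rpow_nonneg (norm_nonneg _) p)]
    exact hptw x hx
  calc ∫ x in S, ‖f x‖ ^ p
      ≤ ∫ x in S, K ^ ((p-2)/2) * ‖f x‖ ^ 2 :=
        setIntegral_mono_on hintp (hintS2.const_mul _) hS hptw
    _ = K ^ ((p-2)/2) * A := by rw [MeasureTheory.integral_const_mul, hAdef]
    _ = (2 / c) ^ ((p - 2) / 2) * R ^ (-(((d : ℝ) - 1) * (p - 2)) / 2) *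
        A ^ ((p + 2) / 4) * B ^ ((p - 2) / 4) := by
        rw [hKdef]
        exact algebra_step₀ hc0 hR hA0 hB0 hp hd
end
end

section
/- Let d ≥ 3 be an integer. Define W_0(x) = [d(d−2)]^{(d−2)/4} (1 + |x|²)^{−(d−2)/2} and W_1(x) = ((d−2)/2) W_0(x) + x · ∇W_0(x). Then W_0, iW_0, and W_1 have square-integrable gradients and are pairwise orthogonal in the real Hilbert space Ḣ¹(ℝ^d; ℂ): ⟨W_0, iW_0⟩_{Ḣ¹} = 0, ⟨W_0, W_1⟩_{Ḣ¹} = 0, and ⟨iW_0, W_1⟩_{Ḣ¹} = 0. -/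
noncomputable section

open MeasureTheory Complex

namespace St12
variable {d : ℕ}

/-- q x = 1 + ‖x‖² -/
def q (x : Ed d) : ℝ := 1 + ‖x‖ ^ 2

lemma q_pos (x : Ed d) : 0 < q x := by unfold q; positivity

lemma one_le_q (x : Ed d) : 1 ≤ q x := by unfold q; nlinarith [sq_nonneg ‖x‖]

lemma normsq_le_q (x : Ed d) : ‖x‖ ^ 2 ≤ q x := by simp [q]

/-- the constant c -/
def cst (d : ℕ) : ℝ := ((d : ℝ) * ((d : ℝ) - 2)) ^ (((d : ℝ) - 2) / 4)

/-- coefficient of ∇W0 -/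
def pW0 (d : ℕ) (x : Ed d) : ℝ :=
  -(cst d * ((d : ℝ) - 2)) * q x ^ (-(((d : ℝ) - 2) / 2) - 1)

lemma hasFDerivAt_q (x : Ed d) :
    HasFDerivAt q ((2 : ℕ) • (innerSL ℝ x)) x := by
  have h := (hasFDerivAt_id x).norm_sq.const_add (1 : ℝ)
  show HasFDerivAt (fun y : Ed d => 1 + ‖y‖ ^ 2) _ x
  simpa using h

lemma hasFDerivAt_W0 (x : Ed d) :
    HasFDerivAt (W0 d) (pW0 d x • (innerSL ℝ x : Ed d →L[ℝ] ℝ)) x := by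
  have hq := hasFDerivAt_q x
  have hr : HasDerivAt (fun t : ℝ => t ^ (-(((d : ℝ) - 2) / 2)))
      ((-(((d : ℝ) - 2) / 2)) * q x ^ ((-(((d : ℝ) - 2) / 2)) - 1)) (q x) :=
    Real.hasDerivAt_rpow_const (Or.inl (q_pos x).ne')
  have h2 := (hr.comp_hasFDerivAt x hq).const_mul (cst d)
  have : W0 d = fun y => cst d * q y ^ (-(((d : ℝ) - 2) / 2)) := by
    funext y; simp [W0, q, cst]
  rw [this]
  refine h2.congr_fderiv (ContinuousLinearMap.ext fun v => ?_)
  simp only [ContinuousLinearMap.smul_apply, ContinuousLinearMap.coe_smul', Pi.smul_apply,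
    smul_eq_mul, nsmul_eq_mul, pW0]
  ring


lemma fderiv_W0_eq (x : Ed d) :
    fderiv ℝ (W0 d) x = pW0 d x • (innerSL ℝ x : Ed d →L[ℝ] ℝ) :=
  (hasFDerivAt_W0 x).fderiv

lemma fderiv_W0_apply (x v : Ed d) :
    fderiv ℝ (W0 d) x v = pW0 d x * (inner ℝ x v : ℝ) := by
  rw [fderiv_W0_eq]; simp

/-- explicit formula for W1 -/
lemma W1_eq (x : Ed d) :
    W1 d x = (((d : ℝ) - 2) * cst d / 2) * (2 - q x) * q x ^ (-((d : ℝ) / 2)) := by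
  have hq := (q_pos x).ne'
  have h1 : fderiv ℝ (W0 d) x x = pW0 d x * ‖x‖ ^ 2 := by
    rw [fderiv_W0_apply, real_inner_self_eq_norm_sq]
  have h0 : W0 d x = cst d * q x ^ (-(((d : ℝ) - 2) / 2)) := by
    simp [W0, q, cst]
  rw [W1, h1, h0, pW0]
  have e1 : (-(((d : ℝ) - 2) / 2)) = (-((d : ℝ) / 2)) + 1 := by ring
  have e2 : (-(((d : ℝ) - 2) / 2) - 1) = (-((d : ℝ) / 2)) := by ring
  rw [e2, e1, Real.rpow_add (q_pos x), Real.rpow_one]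
  have hx2 : ‖x‖ ^ 2 = q x - 1 := by simp [q]
  rw [hx2]; ring

/-- coefficient of ∇W1 -/
def sW1 (d : ℕ) (x : Ed d) : ℝ :=
  -(((d : ℝ) - 2) * cst d) * q x ^ (-((d : ℝ) / 2) - 1) *
    ((d : ℝ) + (1 - (d : ℝ) / 2) * q x)

lemma hasFDerivAt_W1 (x : Ed d) :
    HasFDerivAt (W1 d) (sW1 d x • (innerSL ℝ x : Ed d →L[ℝ] ℝ)) x := by
  have hq := hasFDerivAt_q x
  have hr : HasDerivAt (fun t : ℝ => (((d : ℝ) - 2) * cst d / 2) * ((2 - t) * t ^ (-((d : ℝ) / 2))))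
      ((((d : ℝ) - 2) * cst d / 2) * ((-1) * q x ^ (-((d : ℝ) / 2)) +
        (2 - q x) * ((-((d : ℝ) / 2)) * q x ^ (-((d : ℝ) / 2) - 1)))) (q x) := by
    have ha : HasDerivAt (fun t : ℝ => (2 : ℝ) - t) (-1) (q x) := by
      simpa using (hasDerivAt_id (q x)).const_sub 2
    have hb : HasDerivAt (fun t : ℝ => t ^ (-((d : ℝ) / 2)))
        ((-((d : ℝ) / 2)) * q x ^ ((-((d : ℝ) / 2)) - 1)) (q x) :=
      Real.hasDerivAt_rpow_const (Or.inl (q_pos x).ne')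
    exact (ha.mul hb).const_mul _
  have h2 := hr.comp_hasFDerivAt x hq
  have hW : W1 d = fun y => (((d : ℝ) - 2) * cst d / 2) * ((2 - q y) * q y ^ (-((d : ℝ) / 2))) := by
    funext y; rw [W1_eq]; ring
  rw [hW]
  refine h2.congr_fderiv (ContinuousLinearMap.ext fun v => ?_)
  symm
  have e1 : (-((d : ℝ) / 2)) = (-((d : ℝ) / 2) - 1) + 1 := by ring
  simp only [ContinuousLinearMap.smul_apply, ContinuousLinearMap.coe_smul', Pi.smul_apply,
    smul_eq_mul, sW1]
  rw [e1, Real.rpow_add (q_pos x), Real.rpow_one]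
  ring


lemma inner_single (x : Ed d) (i : Fin d) : (inner ℝ x (EuclideanSpace.single i (1:ℝ)) : ℝ) = x i := by
  rw [EuclideanSpace.inner_single_right]; simp

lemma sum_sq_eq_normsq (x : Ed d) : ∑ i, x i ^ 2 = ‖x‖ ^ 2 := by
  rw [EuclideanSpace.norm_eq, Real.sq_sqrt (by positivity)]
  simp [sq_abs]

lemma hasFDerivAt_W0C (x : Ed d) :
    HasFDerivAt (fun y : Ed d => (W0 d y : ℂ))
      (Complex.ofRealCLM.comp (pW0 d x • (innerSL ℝ x : Ed d →L[ℝ] ℝ))) x :=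
  (Complex.ofRealCLM.hasFDerivAt).comp x (hasFDerivAt_W0 x)

lemma hasFDerivAt_W1C (x : Ed d) :
    HasFDerivAt (fun y : Ed d => (W1 d y : ℂ))
      (Complex.ofRealCLM.comp (sW1 d x • (innerSL ℝ x : Ed d →L[ℝ] ℝ))) x :=
  (Complex.ofRealCLM.hasFDerivAt).comp x (hasFDerivAt_W1 x)

lemma grad_W0C (x : Ed d) (i : Fin d) :
    grad (fun y : Ed d => (W0 d y : ℂ)) x i = ((pW0 d x * x i : ℝ) : ℂ) := by
  rw [grad, (hasFDerivAt_W0C x).fderiv]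
  simp [inner_single x i]

lemma grad_IW0C (x : Ed d) (i : Fin d) :
    grad (fun y : Ed d => Complex.I * (W0 d y : ℂ)) x i
      = Complex.I * ((pW0 d x * x i : ℝ) : ℂ) := by
  have h := (hasFDerivAt_W0C x).const_mul Complex.I
  rw [grad, h.fderiv]
  simp [inner_single x i]

lemma grad_W1C (x : Ed d) (i : Fin d) :
    grad (fun y : Ed d => (W1 d y : ℂ)) x i = ((sW1 d x * x i : ℝ) : ℂ) := by
  rw [grad, (hasFDerivAt_W1C x).fderiv]
  simp [inner_single x i]

lemma gradNormSq_W0C (x : Ed d) :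
    gradNormSq (fun y : Ed d => (W0 d y : ℂ)) x = pW0 d x ^ 2 * ‖x‖ ^ 2 := by
  unfold gradNormSq
  have : ∀ i, ‖grad (fun y : Ed d => (W0 d y : ℂ)) x i‖ ^ 2 = pW0 d x ^ 2 * x i ^ 2 := by
    intro i; rw [grad_W0C]; rw [Complex.norm_real, Real.norm_eq_abs, _root_.sq_abs]; ring
  rw [Finset.sum_congr rfl fun i _ => this i, ← Finset.mul_sum, sum_sq_eq_normsq]

lemma gradNormSq_IW0C (x : Ed d) :
    gradNormSq (fun y : Ed d => Complex.I * (W0 d y : ℂ)) x = pW0 d x ^ 2 * ‖x‖ ^ 2 := by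
  unfold gradNormSq
  have : ∀ i, ‖grad (fun y : Ed d => Complex.I * (W0 d y : ℂ)) x i‖ ^ 2
      = pW0 d x ^ 2 * x i ^ 2 := by
    intro i; rw [grad_IW0C, norm_mul, Complex.norm_I, one_mul, Complex.norm_real, Real.norm_eq_abs, _root_.sq_abs]; ring
  rw [Finset.sum_congr rfl fun i _ => this i, ← Finset.mul_sum, sum_sq_eq_normsq]

lemma gradNormSq_W1C (x : Ed d) :
    gradNormSq (fun y : Ed d => (W1 d y : ℂ)) x = sW1 d x ^ 2 * ‖x‖ ^ 2 := by
  unfold gradNormSq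
  have : ∀ i, ‖grad (fun y : Ed d => (W1 d y : ℂ)) x i‖ ^ 2 = sW1 d x ^ 2 * x i ^ 2 := by
    intro i; rw [grad_W1C, Complex.norm_real, Real.norm_eq_abs, _root_.sq_abs]; ring
  rw [Finset.sum_congr rfl fun i _ => this i, ← Finset.mul_sum, sum_sq_eq_normsq]


lemma re_zero_1 (r r' : ℝ) : ((r : ℂ) * (starRingEnd ℂ) (Complex.I * (r' : ℂ))).re = 0 := by
  simp [Complex.mul_re]

lemma re_zero_3 (r r' : ℝ) : ((Complex.I * (r : ℂ)) * (starRingEnd ℂ) ((r' : ℂ))).re = 0 := by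
  simp [Complex.mul_re]

lemma re_mul (r r' : ℝ) : (((r : ℂ)) * (starRingEnd ℂ) ((r' : ℂ))).re = r * r' := by
  simp [Complex.mul_re]

lemma H1inner_1 : H1inner (fun y : Ed d => (W0 d y : ℂ)) (fun y => Complex.I * (W0 d y : ℂ)) = 0 := by
  unfold H1inner
  have : ∀ x : Ed d, ∑ i, ((grad (fun y : Ed d => (W0 d y : ℂ)) x i) *
      (starRingEnd ℂ) (grad (fun y => Complex.I * (W0 d y : ℂ)) x i)).re = 0 := by
    intro x
    refine Finset.sum_eq_zero fun i _ => ?_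
    rw [grad_W0C, grad_IW0C, re_zero_1]
  simp only [this, integral_zero]

lemma H1inner_3 : H1inner (fun y : Ed d => Complex.I * (W0 d y : ℂ)) (fun y => (W1 d y : ℂ)) = 0 := by
  unfold H1inner
  have : ∀ x : Ed d, ∑ i, ((grad (fun y : Ed d => Complex.I * (W0 d y : ℂ)) x i) *
      (starRingEnd ℂ) (grad (fun y => (W1 d y : ℂ)) x i)).re = 0 := by
    intro x
    refine Finset.sum_eq_zero fun i _ => ?_
    rw [grad_W1C, grad_IW0C, re_zero_3]
  simp only [this, integral_zero]

/-- continuity of pW0, sW1 -/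
lemma continuous_q : Continuous (q : Ed d → ℝ) := by
  unfold q; fun_prop

lemma continuous_pW0 : Continuous (pW0 d) := by
  unfold pW0
  exact continuous_const.mul (continuous_q.rpow_const fun x => Or.inl (q_pos x).ne')

lemma continuous_sW1 : Continuous (sW1 d) := by
  unfold sW1
  exact (continuous_const.mul (continuous_q.rpow_const fun x => Or.inl (q_pos x).ne')).mul
    (continuous_const.add (continuous_const.mul continuous_q))

/-- generic integrability criterion -/
lemma integrable_aux (hd : 3 ≤ d) {f : Ed d → ℝ} (C : ℝ)
    (hm : AEStronglyMeasurable f (volume : Measure (Ed d)))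
    (hb : ∀ x, |f x| ≤ C * ((1 : ℝ) + ‖x‖ ^ 2) ^ (-(2 * (d : ℝ) - 2) / 2)) :
    Integrable f := by
  have hfin : (Module.finrank ℝ (Ed d) : ℝ) < 2 * (d : ℝ) - 2 := by
    rw [finrank_euclideanSpace_fin]
    have : (3 : ℝ) ≤ (d : ℝ) := by exact_mod_cast hd
    linarith
  have hint := (integrable_rpow_neg_one_add_norm_sq (μ := (volume : Measure (Ed d))) hfin).const_mul C
  exact hint.mono' hm (Filter.Eventually.of_forall hb)

lemma pW0_sq (x : Ed d) :
    pW0 d x ^ 2 = (cst d * ((d : ℝ) - 2)) ^ 2 * q x ^ (-(2 * (d : ℝ) - 2) / 2 - 1) := by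
  have hq := q_pos x
  have h2 : (q x ^ (-(((d : ℝ) - 2) / 2) - 1)) ^ 2 = q x ^ (-(2 * (d : ℝ) - 2) / 2 - 1) := by
    rw [← Real.rpow_natCast (q x ^ (-(((d : ℝ) - 2) / 2) - 1)) 2, ← Real.rpow_mul hq.le]
    congr 1; push_cast; ring
  unfold pW0
  rw [mul_pow, neg_sq, h2]

lemma sW1_sq (x : Ed d) :
    sW1 d x ^ 2 = (((d : ℝ) - 2) * cst d) ^ 2 * q x ^ (-(2 * (d : ℝ) - 2) / 2 - 3) *
      ((d : ℝ) + (1 - (d : ℝ) / 2) * q x) ^ 2 := by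
  have hq := q_pos x
  have h2 : (q x ^ (-((d : ℝ) / 2) - 1)) ^ 2 = q x ^ (-(2 * (d : ℝ) - 2) / 2 - 3) := by
    rw [← Real.rpow_natCast (q x ^ (-((d : ℝ) / 2) - 1)) 2, ← Real.rpow_mul hq.le]
    congr 1; push_cast; ring
  unfold sW1
  rw [mul_pow, mul_pow, neg_sq, h2]

lemma bound_quad (hd : 3 ≤ d) (x : Ed d) :
    ((d : ℝ) + (1 - (d : ℝ) / 2) * q x) ^ 2 * ‖x‖ ^ 2 ≤ (3 * (d : ℝ) / 2) ^ 2 * q x ^ 3 := by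
  have h1 := one_le_q x
  have h2 := normsq_le_q x
  have h0 : (0:ℝ) ≤ ‖x‖ ^ 2 := by positivity
  have hd3 : (3 : ℝ) ≤ (d : ℝ) := by exact_mod_cast hd
  have habs : ((d : ℝ) + (1 - (d : ℝ) / 2) * q x) ^ 2 ≤ (3 * (d : ℝ) / 2 * q x) ^ 2 := by
    have hu : -(3 * (d : ℝ) / 2 * q x) ≤ (d : ℝ) + (1 - (d : ℝ) / 2) * q x := by nlinarith
    have hv : (d : ℝ) + (1 - (d : ℝ) / 2) * q x ≤ 3 * (d : ℝ) / 2 * q x := by nlinarith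
    exact sq_le_sq' hu hv
  calc ((d : ℝ) + (1 - (d : ℝ) / 2) * q x) ^ 2 * ‖x‖ ^ 2
      ≤ ((d : ℝ) + (1 - (d : ℝ) / 2) * q x) ^ 2 * q x :=
        mul_le_mul_of_nonneg_left h2 (sq_nonneg _)
    _ ≤ (3 * (d : ℝ) / 2 * q x) ^ 2 * q x := mul_le_mul_of_nonneg_right habs (q_pos x).le
    _ = (3 * (d : ℝ) / 2) ^ 2 * q x ^ 3 := by ring

lemma integrable_gradW0 (hd : 3 ≤ d) :
    Integrable (fun x => gradNormSq (fun y : Ed d => (W0 d y : ℂ)) x) := by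
  have heq : (fun x => gradNormSq (fun y : Ed d => (W0 d y : ℂ)) x)
      = fun x : Ed d => pW0 d x ^ 2 * ‖x‖ ^ 2 := funext gradNormSq_W0C
  rw [heq]
  refine integrable_aux hd ((cst d * ((d : ℝ) - 2)) ^ 2)
    (((continuous_pW0.pow 2).mul ((continuous_norm.pow 2))).aestronglyMeasurable) fun x => ?_
  have hq := q_pos x
  rw [_root_.abs_of_nonneg (by positivity), pW0_sq]
  calc (cst d * ((d : ℝ) - 2)) ^ 2 * q x ^ (-(2 * (d : ℝ) - 2) / 2 - 1) * ‖x‖ ^ 2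
      ≤ (cst d * ((d : ℝ) - 2)) ^ 2 * q x ^ (-(2 * (d : ℝ) - 2) / 2 - 1) * q x := by
        have : (0:ℝ) ≤ (cst d * ((d : ℝ) - 2)) ^ 2 * q x ^ (-(2 * (d : ℝ) - 2) / 2 - 1) := by
          positivity
        exact mul_le_mul_of_nonneg_left (normsq_le_q x) this
    _ = (cst d * ((d : ℝ) - 2)) ^ 2 * ((1 : ℝ) + ‖x‖ ^ 2) ^ (-(2 * (d : ℝ) - 2) / 2) := by
        rw [mul_assoc, ← Real.rpow_add_one hq.ne']
        norm_num [q]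

lemma integrable_gradIW0 (hd : 3 ≤ d) :
    Integrable (fun x => gradNormSq (fun y : Ed d => Complex.I * (W0 d y : ℂ)) x) := by
  have heq : (fun x => gradNormSq (fun y : Ed d => Complex.I * (W0 d y : ℂ)) x)
      = fun x => gradNormSq (fun y : Ed d => (W0 d y : ℂ)) x := by
    funext x; rw [gradNormSq_IW0C, gradNormSq_W0C]
  rw [heq]; exact integrable_gradW0 hd

lemma integrable_gradW1 (hd : 3 ≤ d) :
    Integrable (fun x => gradNormSq (fun y : Ed d => (W1 d y : ℂ)) x) := by
  have heq : (fun x => gradNormSq (fun y : Ed d => (W1 d y : ℂ)) x)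
      = fun x : Ed d => sW1 d x ^ 2 * ‖x‖ ^ 2 := funext gradNormSq_W1C
  rw [heq]
  refine integrable_aux hd ((((d : ℝ) - 2) * cst d) ^ 2 * (3 * (d : ℝ) / 2) ^ 2)
    (((continuous_sW1.pow 2).mul ((continuous_norm.pow 2))).aestronglyMeasurable) fun x => ?_
  have hq := q_pos x
  rw [_root_.abs_of_nonneg (by positivity), sW1_sq]
  calc (((d : ℝ) - 2) * cst d) ^ 2 * q x ^ (-(2 * (d : ℝ) - 2) / 2 - 3) *
        ((d : ℝ) + (1 - (d : ℝ) / 2) * q x) ^ 2 * ‖x‖ ^ 2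
      ≤ (((d : ℝ) - 2) * cst d) ^ 2 * q x ^ (-(2 * (d : ℝ) - 2) / 2 - 3) *
        ((3 * (d : ℝ) / 2) ^ 2 * q x ^ 3) := by
        rw [mul_assoc ((((d : ℝ) - 2) * cst d) ^ 2 * q x ^ (-(2 * (d : ℝ) - 2) / 2 - 3))]
        refine mul_le_mul_of_nonneg_left (bound_quad hd x) (by positivity)
    _ = (((d : ℝ) - 2) * cst d) ^ 2 * (3 * (d : ℝ) / 2) ^ 2 *
        ((1 : ℝ) + ‖x‖ ^ 2) ^ (-(2 * (d : ℝ) - 2) / 2) := by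
        have h3 : q x ^ (-(2 * (d : ℝ) - 2) / 2 - 3) * q x ^ (3:ℕ)
            = q x ^ (-(2 * (d : ℝ) - 2) / 2) := by
          rw [show (q x : ℝ) ^ (3:ℕ) = q x ^ ((3:ℕ):ℝ) from (Real.rpow_natCast _ 3).symm,
            ← Real.rpow_add hq]
          congr 1; push_cast; ring
        calc (((d : ℝ) - 2) * cst d) ^ 2 * q x ^ (-(2 * (d : ℝ) - 2) / 2 - 3) *
              ((3 * (d : ℝ) / 2) ^ 2 * q x ^ (3:ℕ))
            = (((d : ℝ) - 2) * cst d) ^ 2 * (3 * (d : ℝ) / 2) ^ 2 *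
              (q x ^ (-(2 * (d : ℝ) - 2) / 2 - 3) * q x ^ (3:ℕ)) := by ring
          _ = _ := by rw [h3]; simp only [q]


/-- the radial profile of ∇W0·∇W1 -/
def Gfun (d : ℕ) (r : ℝ) : ℝ :=
  (-(cst d * ((d : ℝ) - 2)) * (1 + r ^ 2) ^ (-(((d : ℝ) - 2) / 2) - 1)) *
  (-(((d : ℝ) - 2) * cst d) * (1 + r ^ 2) ^ (-((d : ℝ) / 2) - 1) *
    ((d : ℝ) + (1 - (d : ℝ) / 2) * (1 + r ^ 2))) * r ^ 2

lemma Gfun_eq (d : ℕ) (r : ℝ) :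
    Gfun d r = (((d : ℝ) - 2) * cst d) ^ 2 * r ^ 2 * ((1 + r ^ 2) ^ (d + 1))⁻¹ *
      ((d : ℝ) + (1 - (d : ℝ) / 2) * (1 + r ^ 2)) := by
  have hb : (0:ℝ) < 1 + r ^ 2 := by positivity
  have hx : (1 + r ^ 2 : ℝ) ^ (-(((d : ℝ) - 2) / 2) - 1) * (1 + r ^ 2) ^ (-((d : ℝ) / 2) - 1)
      = ((1 + r ^ 2) ^ (d + 1))⁻¹ := by
    rw [← Real.rpow_add hb,
      show (-(((d : ℝ) - 2) / 2) - 1) + (-((d : ℝ) / 2) - 1) = -(((d + 1 : ℕ)) : ℝ) by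
        push_cast; ring,
      Real.rpow_neg hb.le, Real.rpow_natCast]
  unfold Gfun
  linear_combination ((((d : ℝ) - 2) * cst d) ^ 2 *
    ((d : ℝ) + (1 - (d : ℝ) / 2) * (1 + r ^ 2)) * r ^ 2) * hx

lemma continuous_Gfun : Continuous (Gfun d) := by
  unfold Gfun
  have hb : ∀ r : ℝ, (1 : ℝ) + r ^ 2 ≠ 0 := fun r => by positivity
  have h1 : Continuous fun r : ℝ => (1 : ℝ) + r ^ 2 := by fun_prop
  exact ((continuous_const.mul (h1.rpow_const fun r => Or.inl (hb r))).mul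
    ((continuous_const.mul (h1.rpow_const fun r => Or.inl (hb r))).mul
      (continuous_const.add (continuous_const.mul h1)))).mul (continuous_pow 2)

lemma oneD (hd : 3 ≤ d) :
    ∫ r in Set.Ioi (0:ℝ), r ^ (d - 1) • Gfun d r = 0 := by
  obtain ⟨e, rfl⟩ : ∃ e, d = e + 3 := ⟨d - 3, by omega⟩
  set C : ℝ := cst (e + 3) with hC
  set K2 : ℝ := (((e : ℝ) + 1) * C) ^ 2 with hK2
  set F : ℝ → ℝ := fun r => K2 / 2 * (r ^ (e + 5) / (1 + r ^ 2) ^ (e + 3)) with hF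
  have hK2e : ∀ r : ℝ, (((e + 3 : ℕ) : ℝ) - 2) * C = ((e : ℝ) + 1) * C := by
    intro r; push_cast; ring
  have hder : ∀ r : ℝ, HasDerivAt F (r ^ (e + 2) * Gfun (e + 3) r) r := by
    intro r
    have hb : (0:ℝ) < 1 + r ^ 2 := by positivity
    have h1 : HasDerivAt (fun s : ℝ => s ^ (e + 5)) (((e + 5 : ℕ) : ℝ) * r ^ (e + 4)) r :=
      hasDerivAt_pow (e + 5) r
    have hq1 : HasDerivAt (fun s : ℝ => (1:ℝ) + s ^ 2) (2 * r) r := by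
      simpa using ((hasDerivAt_pow 2 r).const_add 1)
    have h2 : HasDerivAt (fun s : ℝ => ((1:ℝ) + s ^ 2) ^ (e + 3))
        (((e + 3 : ℕ) : ℝ) * ((1:ℝ) + r ^ 2) ^ (e + 2) * (2 * r)) r := hq1.pow (e + 3)
    have h3 := (h1.div h2 (by positivity)).const_mul (K2 / 2)
    refine h3.congr_deriv ?_
    symm
    rw [Gfun_eq]
    have hne : ((1:ℝ) + r ^ 2) ^ (e + 3) ≠ 0 := by positivity
    have hne2 : ((1:ℝ) + r ^ 2) ^ (e + 4) ≠ 0 := by positivity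
    field_simp [hK2]
    push_cast
    ring
  have hbound : ∀ r ∈ Set.Ioi (0:ℝ),
      |r ^ (e + 2) * Gfun (e + 3) r| ≤ K2 * (3 * ((e:ℝ) + 3) / 2) * (1 + r ^ 2)⁻¹ := by
    intro r hr
    have hr0 : (0:ℝ) < r := hr
    have hb : (0:ℝ) < 1 + r ^ 2 := by positivity
    have h1q : (1:ℝ) ≤ 1 + r ^ 2 := by nlinarith
    have hDabs : |((e + 3 : ℕ) : ℝ) + (1 - ((e + 3 : ℕ) : ℝ) / 2) * (1 + r ^ 2)|
        ≤ 3 * ((e:ℝ) + 3) / 2 * (1 + r ^ 2) := by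
      rw [abs_le]; push_cast; constructor <;> nlinarith
    have hcore : r ^ (e + 4) * (1 + r ^ 2) ≤ (1 + r ^ 2) ^ (e + 3) := by
      have hA : (r ^ 2) ^ (e + 4) ≤ (1 + r ^ 2) ^ (e + 4) :=
        pow_le_pow_left₀ (sq_nonneg r) (by nlinarith) _
      have hB : ((1:ℝ) + r ^ 2) ^ (e + 6) ≤ (1 + r ^ 2) ^ (2 * (e + 3)) :=
        pow_le_pow_right₀ h1q (by omega)
      have hsq : (r ^ (e + 4) * (1 + r ^ 2)) ^ 2 ≤ (((1:ℝ) + r ^ 2) ^ (e + 3)) ^ 2 := by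
        calc (r ^ (e + 4) * (1 + r ^ 2)) ^ 2 = (r ^ 2) ^ (e + 4) * (1 + r ^ 2) ^ 2 := by ring
          _ ≤ (1 + r ^ 2) ^ (e + 4) * (1 + r ^ 2) ^ 2 :=
              mul_le_mul_of_nonneg_right hA (by positivity)
          _ = (1 + r ^ 2) ^ (e + 6) := by ring
          _ ≤ (1 + r ^ 2) ^ (2 * (e + 3)) := hB
          _ = (((1:ℝ) + r ^ 2) ^ (e + 3)) ^ 2 := by rw [pow_mul']
      nlinarith [pow_pos hb (e + 3), pow_nonneg hr0.le (e + 4), hsq,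
        mul_pos (pow_pos hr0 (e + 4)) hb]
    rw [Gfun_eq, abs_mul, abs_mul]
    rw [_root_.abs_of_nonneg (le_of_lt (pow_pos hr0 (e + 2)))]
    rw [_root_.abs_of_nonneg (by positivity :
      (0:ℝ) ≤ (((((e + 3 : ℕ)) : ℝ) - 2) * cst (e + 3)) ^ 2 * r ^ 2 *
        ((1 + r ^ 2) ^ (e + 3 + 1))⁻¹)]
    calc r ^ (e + 2) * ((((((e + 3 : ℕ)) : ℝ) - 2) * cst (e + 3)) ^ 2 * r ^ 2 *
            ((1 + r ^ 2) ^ (e + 3 + 1))⁻¹ *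
          |((e + 3 : ℕ) : ℝ) + (1 - ((e + 3 : ℕ) : ℝ) / 2) * (1 + r ^ 2)|)
        ≤ r ^ (e + 2) * ((((((e + 3 : ℕ)) : ℝ) - 2) * cst (e + 3)) ^ 2 * r ^ 2 *
            ((1 + r ^ 2) ^ (e + 3 + 1))⁻¹ *
          (3 * ((e:ℝ) + 3) / 2 * (1 + r ^ 2))) := by
          gcongr
      _ = K2 * (3 * ((e:ℝ) + 3) / 2) * (r ^ (e + 4) * (1 + r ^ 2) * ((1 + r ^ 2) ^ (e + 4))⁻¹) := by
          rw [hK2]; push_cast; ring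
      _ ≤ K2 * (3 * ((e:ℝ) + 3) / 2) * ((1 + r ^ 2) ^ (e + 3) * ((1 + r ^ 2) ^ (e + 4))⁻¹) := by
          have : (0:ℝ) ≤ K2 * (3 * ((e:ℝ) + 3) / 2) := by positivity
          exact mul_le_mul_of_nonneg_left
            (mul_le_mul_of_nonneg_right hcore (by positivity)) this
      _ = K2 * (3 * ((e:ℝ) + 3) / 2) * (1 + r ^ 2)⁻¹ := by
          congr 1
          rw [pow_succ]
          field_simp
          ring
  have hmeas : Continuous fun r : ℝ => r ^ (e + 2) * Gfun (e + 3) r :=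
    (continuous_pow _).mul continuous_Gfun
  have hint : MeasureTheory.IntegrableOn (fun r : ℝ => r ^ (e + 2) * Gfun (e + 3) r)
      (Set.Ioi (0:ℝ)) := by
    refine ((integrable_inv_one_add_sq.const_mul
      (K2 * (3 * ((e:ℝ) + 3) / 2))).restrict (s := Set.Ioi (0:ℝ))).mono'
      hmeas.aestronglyMeasurable.restrict ?_
    refine (MeasureTheory.ae_restrict_iff' measurableSet_Ioi).mpr
      (Filter.Eventually.of_forall fun r hr => ?_)
    simpa only [Real.norm_eq_abs] using hbound r hr
  have htop : Filter.Tendsto F Filter.atTop (nhds 0) := by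
    have hup : Filter.Tendsto (fun r : ℝ => K2 / 2 * (r ^ (e + 1))⁻¹) Filter.atTop (nhds 0) := by
      have h1 : Filter.Tendsto (fun r : ℝ => (r ^ (e + 1))⁻¹) Filter.atTop (nhds 0) :=
        tendsto_inv_atTop_zero.comp (Filter.tendsto_pow_atTop (by omega))
      have h2 := h1.const_mul (K2 / 2)
      simpa using h2
    refine squeeze_zero' ?_ ?_ hup
    · filter_upwards [Filter.eventually_ge_atTop (0:ℝ)] with r hr
      have : (0:ℝ) < 1 + r ^ 2 := by positivity
      exact mul_nonneg (by positivity) (div_nonneg (pow_nonneg hr _) (by positivity))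
    · filter_upwards [Filter.eventually_ge_atTop (1:ℝ)] with r hr
      have hr0 : (0:ℝ) < r := lt_of_lt_of_le one_pos hr
      have hden : r ^ (2 * e + 6) ≤ (1 + r ^ 2) ^ (e + 3) := by
        calc r ^ (2 * e + 6) = (r ^ 2) ^ (e + 3) := by ring
          _ ≤ (1 + r ^ 2) ^ (e + 3) := pow_le_pow_left₀ (sq_nonneg r) (by nlinarith) _
      have hstep : r ^ (e + 5) / (1 + r ^ 2) ^ (e + 3) ≤ (r ^ (e + 1))⁻¹ := by
        rw [div_le_iff₀ (by positivity)]
        rw [inv_mul_eq_div, le_div_iff₀ (by positivity)]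
        calc r ^ (e + 5) * r ^ (e + 1) = r ^ (2 * e + 6) := by ring
          _ ≤ (1 + r ^ 2) ^ (e + 3) := hden
      exact mul_le_mul_of_nonneg_left hstep (by positivity)
  have hFTC := MeasureTheory.integral_Ioi_of_hasDerivAt_of_tendsto' (a := (0:ℝ))
    (fun x _ => hder x) hint htop
  have hF0 : F 0 = 0 := by simp [hF]
  rw [show e + 3 - 1 = e + 2 from rfl]
  simp only [smul_eq_mul]
  rw [hFTC, hF0, sub_zero]

lemma nontrivial_Ed (hd : 3 ≤ d) : Nontrivial (Ed d) := by
  refine nontrivial_of_ne (EuclideanSpace.single (⟨0, by omega⟩ : Fin d) (1:ℝ)) 0 fun h => ?_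
  have := congrArg (fun v => ‖v‖) h
  simp at this

lemma H1inner_2 (hd : 3 ≤ d) :
    H1inner (fun y : Ed d => (W0 d y : ℂ)) (fun y => (W1 d y : ℂ)) = 0 := by
  haveI := nontrivial_Ed hd
  have hpt : ∀ x : Ed d, (∑ i, ((grad (fun y : Ed d => (W0 d y : ℂ)) x i) *
      (starRingEnd ℂ) (grad (fun y => (W1 d y : ℂ)) x i)).re) = Gfun d ‖x‖ := by
    intro x
    have h1 : ∀ i : Fin d, ((grad (fun y : Ed d => (W0 d y : ℂ)) x i) *
        (starRingEnd ℂ) (grad (fun y => (W1 d y : ℂ)) x i)).re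
        = (pW0 d x * sW1 d x) * x i ^ 2 := by
      intro i
      rw [grad_W0C, grad_W1C, re_mul]
      ring
    rw [Finset.sum_congr rfl fun i _ => h1 i, ← Finset.mul_sum, sum_sq_eq_normsq]
    simp only [pW0, sW1, q, Gfun]
  unfold H1inner
  rw [show (fun x : Ed d => ∑ i, ((grad (fun y : Ed d => (W0 d y : ℂ)) x i) *
      (starRingEnd ℂ) (grad (fun y => (W1 d y : ℂ)) x i)).re) = fun x => Gfun d ‖x‖ from
    funext hpt]
  rw [MeasureTheory.integral_fun_norm_addHaar (volume : Measure (Ed d)) (Gfun d)]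
  simp only [finrank_euclideanSpace_fin]
  rw [oneD hd]
  simp

end St12

/-- `W_0`, `iW_0`, `W_1` have square-integrable gradients and are
pairwise orthogonal in the real Hilbert space `Ḣ¹(ℝ^d; ℂ)`. -/
theorem statement12 (d : ℕ) (hd : 3 ≤ d) :
    Integrable (fun x => gradNormSq (fun y : Ed d => (W0 d y : ℂ)) x) ∧
    Integrable (fun x => gradNormSq (fun y : Ed d => Complex.I * (W0 d y : ℂ)) x) ∧
    Integrable (fun x => gradNormSq (fun y : Ed d => (W1 d y : ℂ)) x) ∧
    H1inner (fun y : Ed d => (W0 d y : ℂ)) (fun y => Complex.I * (W0 d y : ℂ)) = 0 ∧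
    H1inner (fun y : Ed d => (W0 d y : ℂ)) (fun y => (W1 d y : ℂ)) = 0 ∧
    H1inner (fun y : Ed d => Complex.I * (W0 d y : ℂ)) (fun y => (W1 d y : ℂ)) = 0 :=
  ⟨St12.integrable_gradW0 hd, St12.integrable_gradIW0 hd, St12.integrable_gradW1 hd,
    St12.H1inner_1, St12.H1inner_2 hd, St12.H1inner_3⟩
end
end

section
/- Let d ≥ 3 be an integer and set 2* = 2d/(d−2). Define W_0(x) = [d(d−2)]^{(d−2)/4} (1 + |x|²)^{−(d−2)/2}, W_1(x) = ((d−2)/2) W_0(x) + x · ∇W_0(x), and the quadratic form Q(g) = (1/2) ∫_{ℝ^d} |∇g|² dx − (1/2) ∫_{ℝ^d} W_0^{4/(d−2)} [((d+2)/(d−2)) (Re g)² + (Im g)²] dx. Then Q(iW_0) = 0, Q(W_1) = 0, and Q(W_0) = −(2/(d−2)) ∫_{ℝ^d} W_0^{2*} dx < 0. -/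
noncomputable section

open MeasureTheory Complex

-- ===== auxiliary material =====

open Real Set Filter Topology

/-- the constant in `W0` -/
def cst (d : ℕ) : ℝ := ((d : ℝ) * ((d : ℝ) - 2)) ^ (((d : ℝ) - 2) / 4)

variable {d : ℕ}

lemma cst_pos (hd : 3 ≤ d) : 0 < cst d := by
  have h3 : (3:ℝ) ≤ (d:ℝ) := by exact_mod_cast hd
  have : (0:ℝ) < (d:ℝ) * ((d:ℝ) - 2) := by nlinarith
  exact rpow_pos_of_pos this _

lemma norm_sq_sum (x : Ed d) : ‖x‖ ^ 2 = ∑ i, x i ^ 2 := by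
  rw [EuclideanSpace.norm_eq, Real.sq_sqrt (by positivity)]
  simp [sq_abs]

/-- derivative of a radial profile composed with `‖x‖²` -/
lemma hasFDerivAt_radial {φ : ℝ → ℝ} {φ' : ℝ} (x : Ed d)
    (hφ : HasDerivAt φ φ' (‖x‖ ^ 2)) :
    HasFDerivAt (fun y : Ed d => φ (‖y‖ ^ 2)) ((2 * φ') • innerSL ℝ x) x := by
  have hn : HasFDerivAt (fun y : Ed d => ‖y‖ ^ 2) (2 • innerSL ℝ x) x :=
    (hasStrictFDerivAt_norm_sq x).hasFDerivAt
  have := hφ.comp_hasFDerivAt x hn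
  refine this.congr_fderiv ?_
  ext v
  simp [two_smul, smul_smul]
  ring

lemma hasDerivAt_profile0 (t : ℝ) (ht : 0 ≤ t) (q : ℝ) :
    HasDerivAt (fun s : ℝ => (1 + s) ^ q) (q * (1 + t) ^ (q - 1)) t := by
  have hpos : (0:ℝ) < 1 + t := by linarith
  have hu : HasDerivAt (fun s : ℝ => 1 + s) 1 t := (hasDerivAt_id t).const_add 1
  have houter : HasDerivAt (fun s : ℝ => s ^ q) (q * (1 + t) ^ (q - 1)) (1 + t) :=
    Real.hasDerivAt_rpow_const (Or.inl hpos.ne')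
  exact (houter.comp t hu).congr_deriv (mul_one _)

lemma hasFDerivAt_W0 (x : Ed d) :
    HasFDerivAt (W0 d) ((-(cst d * ((d:ℝ) - 2)) * (1 + ‖x‖ ^ 2) ^ (-((d:ℝ)/2)))
      • innerSL ℝ x) x := by
  have hq := (hasDerivAt_profile0 (‖x‖ ^ 2) (by positivity) (-(((d:ℝ)-2)/2))).const_mul (cst d)
  have := hasFDerivAt_radial x hq
  have hfun : (W0 d) = fun y : Ed d => cst d * (1 + ‖y‖ ^ 2) ^ (-(((d:ℝ)-2)/2)) := rfl
  rw [hfun]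
  refine this.congr_fderiv ?_
  congr 1
  rw [show -(((d:ℝ)-2)/2) - 1 = -((d:ℝ)/2) by ring]
  ring

lemma gradR_W0 (x : Ed d) (i : Fin d) :
    gradR (W0 d) x i = -(cst d * ((d:ℝ) - 2)) * (1 + ‖x‖ ^ 2) ^ (-((d:ℝ)/2)) * x i := by
  rw [gradR, (hasFDerivAt_W0 x).fderiv]
  simp [innerSL_apply_apply, EuclideanSpace.inner_single_right]

lemma rpow_sq_helper {t q : ℝ} (ht : 0 ≤ t) : ((1 + t) ^ q) ^ 2 = (1 + t) ^ (2 * q) := by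
  have hpos : (0:ℝ) < 1 + t := by linarith
  rw [sq, ← rpow_add hpos]
  congr 1; ring

lemma gradNormSqR_W0 (x : Ed d) :
    gradNormSqR (W0 d) x =
      (cst d * ((d:ℝ) - 2)) ^ 2 * (‖x‖ ^ 2 * (1 + ‖x‖ ^ 2) ^ (-(d:ℝ))) := by
  rw [gradNormSqR]
  simp only [gradR_W0, mul_pow]
  rw [← Finset.mul_sum, ← norm_sq_sum]
  rw [rpow_sq_helper (by positivity)]
  rw [show 2 * (-((d:ℝ)/2)) = -(d:ℝ) by ring]
  ring

lemma fderiv_W0_self (x : Ed d) :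
    fderiv ℝ (W0 d) x x =
      -(cst d * ((d:ℝ) - 2)) * (1 + ‖x‖ ^ 2) ^ (-((d:ℝ)/2)) * ‖x‖ ^ 2 := by
  rw [(hasFDerivAt_W0 x).fderiv, ContinuousLinearMap.smul_apply, innerSL_apply_apply,
    real_inner_self_eq_norm_sq, smul_eq_mul]

lemma W1_eq (x : Ed d) :
    W1 d x = (cst d * ((d:ℝ) - 2) / 2) *
      ((1 - ‖x‖ ^ 2) * (1 + ‖x‖ ^ 2) ^ (-((d:ℝ)/2))) := by
  have hpos : (0:ℝ) < 1 + ‖x‖ ^ 2 := by positivity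
  rw [W1, fderiv_W0_self]
  have hW0x : W0 d x = cst d * ((1 + ‖x‖ ^ 2) * (1 + ‖x‖ ^ 2) ^ (-((d:ℝ)/2))) := by
    rw [show (W0 d x) = cst d * (1 + ‖x‖ ^ 2) ^ (-(((d:ℝ)-2)/2)) from rfl]
    rw [show -(((d:ℝ)-2)/2) = 1 + -((d:ℝ)/2) by ring, rpow_add hpos, rpow_one]
  rw [hW0x]
  ring

lemma hasFDerivAt_W1 (x : Ed d) :
    HasFDerivAt (W1 d)
      ((2 * ((cst d * ((d:ℝ)-2)/2) * (-(1 + ‖x‖ ^ 2) ^ (-((d:ℝ)/2)) +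
        (1 - ‖x‖ ^ 2) * (-((d:ℝ)/2)) * (1 + ‖x‖ ^ 2) ^ (-((d:ℝ)/2) - 1))))
      • innerSL ℝ x) x := by
  have hfun : (W1 d) = fun y : Ed d => (cst d * ((d:ℝ)-2)/2) *
      ((1 - ‖y‖ ^ 2) * (1 + ‖y‖ ^ 2) ^ (-((d:ℝ)/2))) := funext W1_eq
  rw [hfun]
  have hφ : HasDerivAt (fun s : ℝ => (cst d * ((d:ℝ)-2)/2) *
      ((1 - s) * (1 + s) ^ (-((d:ℝ)/2))))
      ((cst d * ((d:ℝ)-2)/2) * (-(1 + ‖x‖ ^ 2) ^ (-((d:ℝ)/2)) +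
        (1 - ‖x‖ ^ 2) * (-((d:ℝ)/2)) * (1 + ‖x‖ ^ 2) ^ (-((d:ℝ)/2) - 1))) (‖x‖ ^ 2) := by
    have h1 : HasDerivAt (fun s : ℝ => 1 - s) (-1) (‖x‖ ^ 2) := by
      simpa using (hasDerivAt_id (‖x‖ ^ 2)).const_sub 1
    have h2 := hasDerivAt_profile0 (‖x‖ ^ 2) (by positivity) (-((d:ℝ)/2))
    have := (h1.mul h2).const_mul (cst d * ((d:ℝ)-2)/2)
    refine this.congr_deriv ?_
    ring
  exact hasFDerivAt_radial x hφ

lemma gradNormSqR_W1 (x : Ed d) :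
    gradNormSqR (W1 d) x = (cst d * ((d:ℝ) - 2)) ^ 2 *
      ((((d:ℝ)+2)/2 + ((2-(d:ℝ))/2) * ‖x‖ ^ 2) ^ 2 *
        (‖x‖ ^ 2 * (1 + ‖x‖ ^ 2) ^ (-((d:ℝ)+2)))) := by
  set t := ‖x‖ ^ 2 with ht
  have hpos : (0:ℝ) < 1 + t := by positivity
  have hgrad : ∀ i, gradR (W1 d) x i =
      (2 * ((cst d * ((d:ℝ)-2)/2) * (-(1 + t) ^ (-((d:ℝ)/2)) +
        (1 - t) * (-((d:ℝ)/2)) * (1 + t) ^ (-((d:ℝ)/2) - 1)))) * x i := by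
    intro i
    rw [gradR, (hasFDerivAt_W1 x).fderiv]
    simp [innerSL_apply_apply, EuclideanSpace.inner_single_right, ht]
  rw [gradNormSqR]
  simp only [hgrad, mul_pow]
  rw [← Finset.mul_sum, ← norm_sq_sum, ← ht]
  have e1 : (1 + t) ^ (-((d:ℝ)/2)) = (1 + t) * (1 + t) ^ (-((d:ℝ)/2) - 1) := by
    nth_rewrite 2 [← rpow_one (1 + t)]
    rw [← rpow_add hpos]
    congr 1; ring
  have e2 : ((1 + t) ^ (-((d:ℝ)/2) - 1)) ^ 2 = (1 + t) ^ (-((d:ℝ)+2)) := by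
    rw [rpow_sq_helper (by positivity), show 2 * (-((d:ℝ)/2) - 1) = -((d:ℝ)+2) by ring]
  rw [e1, ← e2]
  ring

lemma gradNormSq_ofReal {f : Ed d → ℝ} {L : Ed d →L[ℝ] ℝ} {x : Ed d}
    (hf : HasFDerivAt f L x) :
    gradNormSq (fun y => ((f y : ℝ) : ℂ)) x = gradNormSqR f x := by
  have h : HasFDerivAt (fun y : Ed d => ((f y : ℝ) : ℂ))
      (Complex.ofRealCLM.comp L) x := Complex.ofRealCLM.hasFDerivAt.comp x hf
  rw [gradNormSq, gradNormSqR]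
  refine Finset.sum_congr rfl fun i _ => ?_
  rw [grad, gradR, h.fderiv, hf.fderiv]
  simp [sq_abs]

lemma gradNormSq_I_mul {f : Ed d → ℝ} {L : Ed d →L[ℝ] ℝ} {x : Ed d}
    (hf : HasFDerivAt f L x) :
    gradNormSq (fun y => Complex.I * ((f y : ℝ) : ℂ)) x = gradNormSqR f x := by
  have h0 : HasFDerivAt (fun y : Ed d => ((f y : ℝ) : ℂ))
      (Complex.ofRealCLM.comp L) x := Complex.ofRealCLM.hasFDerivAt.comp x hf
  have h : HasFDerivAt (fun y : Ed d => Complex.I * ((f y : ℝ) : ℂ))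
      (Complex.I • (Complex.ofRealCLM.comp L)) x := h0.const_mul Complex.I
  rw [gradNormSq, gradNormSqR]
  refine Finset.sum_congr rfl fun i _ => ?_
  rw [grad, gradR, h.fderiv, hf.fderiv]
  simp [norm_mul, sq_abs]

lemma W0_pos (hd : 3 ≤ d) (x : Ed d) : 0 < W0 d x :=
  mul_pos (cst_pos hd) (rpow_pos_of_pos (by positivity) _)

lemma cst_rpow (hd : 3 ≤ d) (q : ℝ) :
    (cst d) ^ q = ((d:ℝ) * ((d:ℝ) - 2)) ^ ((((d:ℝ) - 2) / 4) * q) := by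
  have h3 : (3:ℝ) ≤ (d:ℝ) := by exact_mod_cast hd
  have hbase : (0:ℝ) < (d:ℝ) * ((d:ℝ) - 2) := by nlinarith
  rw [cst, ← rpow_mul hbase.le]

lemma W0_rpow (hd : 3 ≤ d) (x : Ed d) (q : ℝ) :
    W0 d x ^ q = ((d:ℝ) * ((d:ℝ) - 2)) ^ ((((d:ℝ) - 2) / 4) * q) *
      (1 + ‖x‖ ^ 2) ^ ((-(((d:ℝ) - 2) / 2)) * q) := by
  have hpos : (0:ℝ) < 1 + ‖x‖ ^ 2 := by positivity
  rw [show W0 d x = cst d * (1 + ‖x‖ ^ 2) ^ (-(((d:ℝ)-2)/2)) from rfl,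
    mul_rpow (cst_pos hd).le (rpow_nonneg hpos.le _), cst_rpow hd,
    ← rpow_mul hpos.le]


/-- `d · vol(B₁)`, the polar coordinates constant. -/
def kap (d : ℕ) : ℝ := d * (volume (Metric.ball (0 : Ed d) 1)).toReal

lemma kap_pos (hd : 3 ≤ d) : 0 < kap d := by
  have hne : Nonempty (Fin d) := ⟨⟨0, by omega⟩⟩
  refine mul_pos (by exact_mod_cast (by omega : 0 < d)) ?_
  exact ENNReal.toReal_pos (Metric.measure_ball_pos _ _ (by norm_num)).ne'
    measure_ball_lt_top.ne

lemma polar (hd : 3 ≤ d) (f : ℝ → ℝ) :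
    (∫ x : Ed d, f ‖x‖) = kap d * ∫ r in Set.Ioi (0:ℝ), r ^ ((d:ℝ) - 1) * f r := by
  haveI : Nontrivial (Ed d) := by
    refine ⟨0, EuclideanSpace.single (⟨0, by omega⟩ : Fin d) (1:ℝ), fun h => ?_⟩
    have := congrArg norm h
    simp [EuclideanSpace.norm_single] at this
  have h2 : ∫ y in Set.Ioi (0:ℝ), y ^ (d - 1) • f y
      = ∫ r in Set.Ioi (0:ℝ), r ^ ((d:ℝ) - 1) * f r := by
    refine MeasureTheory.setIntegral_congr_fun measurableSet_Ioi fun r hr => ?_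
    rw [smul_eq_mul]
    congr 1
    rw [← rpow_natCast r (d - 1)]
    congr 1
    have h1d : (1:ℕ) ≤ d := by omega
    push_cast [Nat.cast_sub h1d]
    ring
  rw [MeasureTheory.integral_fun_norm_addHaar volume f, finrank_euclideanSpace_fin, h2,
    nsmul_eq_mul, smul_eq_mul, kap, mul_assoc]
  rfl

-- ===== 1D integrals =====

/-- The 1D radial integral. -/
def I1 (a k : ℝ) : ℝ := ∫ r in Ioi (0:ℝ), r ^ a * (1 + r ^ 2) ^ (-k)

lemma integrand_nonneg (a k : ℝ) {r : ℝ} (hr : 0 < r) :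
    0 ≤ r ^ a * (1 + r ^ 2) ^ (-k) :=
  mul_nonneg (rpow_nonneg hr.le a) (rpow_nonneg (by positivity) _)

lemma integrableI1 {a k : ℝ} (ha : 0 ≤ a) (hk : a + 1 < 2 * k) :
    IntegrableOn (fun r => r ^ a * (1 + r ^ 2) ^ (-k)) (Ioi (0:ℝ)) := by
  have hcont : ContinuousOn (fun r : ℝ => r ^ a * (1 + r ^ 2) ^ (-k)) (Ioi 0) := by
    intro r hr
    have h1 : (0:ℝ) < 1 + r ^ 2 := by positivity
    exact ((continuousAt_rpow_const r a (Or.inl (ne_of_gt hr))).mul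
      (((continuous_const.add (continuous_pow 2)).continuousAt).rpow_const
        (Or.inl h1.ne'))).continuousWithinAt
  rw [← Ioc_union_Ioi_eq_Ioi (zero_le_one (α := ℝ)), integrableOn_union]
  constructor
  · -- on (0,1]
    have : IntegrableOn (fun r : ℝ => r ^ a * (1 + r ^ 2) ^ (-k)) (Ioc 0 1) := by
      apply Measure.integrableOn_of_bounded (M := 2 ^ |k|) measure_Ioc_lt_top.ne
      · exact Measurable.aestronglyMeasurable (by fun_prop)
      · filter_upwards [ae_restrict_mem measurableSet_Ioc] with r hr
        have hr0 : 0 < r := hr.1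
        have h1 : (1:ℝ) ≤ 1 + r ^ 2 := by nlinarith
        have h2 : 1 + r ^ 2 ≤ 2 := by nlinarith [hr.2, hr0.le]
        rw [Real.norm_eq_abs, _root_.abs_of_nonneg (integrand_nonneg a k hr0)]
        have hra : r ^ a ≤ 1 := by
          calc r ^ a ≤ 1 ^ a := rpow_le_rpow hr0.le hr.2 ha
          _ = 1 := one_rpow a
        have hpk : (1 + r ^ 2) ^ (-k) ≤ 2 ^ |k| := by
          rcases le_or_gt 0 k with h | h
          · calc (1 + r ^ 2) ^ (-k) ≤ 1 ^ (-k) :=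
                rpow_le_rpow_of_nonpos (by norm_num) h1 (by linarith)
            _ = 1 := one_rpow _
            _ ≤ 2 ^ |k| := one_le_rpow (by norm_num) (abs_nonneg k)
          · calc (1 + r ^ 2) ^ (-k) ≤ 2 ^ (-k) :=
                rpow_le_rpow (by positivity) h2 (by linarith)
            _ = 2 ^ |k| := by rw [abs_of_neg h]
        calc r ^ a * (1 + r ^ 2) ^ (-k) ≤ 1 * (2 ^ |k|) :=
          mul_le_mul hra hpk (rpow_nonneg (by positivity) _) zero_le_one
        _ = 2 ^ |k| := one_mul _
    exact this
  · -- on (1,∞): dominated by r ^ (a - 2*k)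
    have hbig : IntegrableOn (fun r : ℝ => r ^ (a - 2 * k)) (Ioi 1) :=
      integrableOn_Ioi_rpow_of_lt (by linarith) zero_lt_one
    apply hbig.mono' (Measurable.aestronglyMeasurable (by fun_prop))
    filter_upwards [ae_restrict_mem measurableSet_Ioi] with r hr
    have hr1 : (1:ℝ) < r := hr
    have hr0 : (0:ℝ) < r := lt_trans zero_lt_one hr1
    rw [Real.norm_eq_abs, _root_.abs_of_nonneg (integrand_nonneg a k hr0)]
    have h2 : (1 + r ^ 2) ^ (-k) ≤ (r ^ 2) ^ (-k) := by
      exact rpow_le_rpow_of_nonpos (by positivity) (by nlinarith) (by nlinarith)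
    calc r ^ a * (1 + r ^ 2) ^ (-k) ≤ r ^ a * (r ^ 2) ^ (-k) :=
        mul_le_mul_of_nonneg_left h2 (rpow_nonneg hr0.le a)
      _ = r ^ (a - 2 * k) := by
        rw [← rpow_natCast r 2, ← rpow_mul hr0.le, ← rpow_add hr0]
        congr 1; ring


lemma I1_pos {a k : ℝ} (ha : 0 ≤ a) (hk : a + 1 < 2 * k) : 0 < I1 a k := by
  rw [I1, setIntegral_pos_iff_support_of_nonneg_ae]
  · have hsub : Ioi (0:ℝ) ⊆ Function.support (fun r => r ^ a * (1 + r ^ 2) ^ (-k)) := by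
      intro r hr
      have hr0 : (0:ℝ) < r := hr
      have : 0 < r ^ a * (1 + r ^ 2) ^ (-k) := by positivity
      exact this.ne'
    rw [inter_eq_right.mpr hsub, Real.volume_Ioi]
    exact ENNReal.zero_lt_top
  · filter_upwards [ae_restrict_mem measurableSet_Ioi] with r hr
    have hr0 : (0:ℝ) < r := hr
    positivity
  · exact integrableI1 ha hk

lemma I1_rec {a k : ℝ} (ha : 0 ≤ a) (hk : a + 3 < 2 * k) :
    I1 (a + 2) k = (a + 1) / (2 * k - a - 3) * I1 a k := by
  have hk1 : a + 1 < 2 * k := by linarith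
  have hk2 : (a + 2) + 1 < 2 * k := by linarith
  have hint1 := integrableI1 ha hk1
  have hint2 := integrableI1 (by linarith : (0:ℝ) ≤ a + 2) hk2
  set F : ℝ → ℝ := fun r => r ^ (a + 1) * (1 + r ^ 2) ^ (1 - k) with hF
  set f' : ℝ → ℝ := fun r => (a + 1) * (r ^ a * (1 + r ^ 2) ^ (-k)) +
    (a + 3 - 2 * k) * (r ^ (a + 2) * (1 + r ^ 2) ^ (-k)) with hf'
  have hderiv : ∀ r ∈ Ioi (0:ℝ), HasDerivAt F (f' r) r := by
    intro r hr
    have hr0 : (0:ℝ) < r := hr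
    have hpos : (0:ℝ) < 1 + r ^ 2 := by positivity
    have h1 : HasDerivAt (fun r : ℝ => r ^ (a + 1)) ((a + 1) * r ^ a) r := by
      have := Real.hasDerivAt_rpow_const (p := a + 1) (Or.inl hr0.ne')
      simpa [add_sub_cancel_right] using this
    have hu : HasDerivAt (fun r : ℝ => 1 + r ^ 2) (2 * r) r := by
      simpa using ((hasDerivAt_pow 2 r).const_add 1)
    have h2 : HasDerivAt (fun r : ℝ => (1 + r ^ 2) ^ (1 - k))
        ((1 - k) * (1 + r ^ 2) ^ (-k) * (2 * r)) r := by
      have houter : HasDerivAt (fun s : ℝ => s ^ (1 - k))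
          ((1 - k) * (1 + r ^ 2) ^ (1 - k - 1)) (1 + r ^ 2) :=
        Real.hasDerivAt_rpow_const (Or.inl hpos.ne')
      have := houter.comp r hu
      refine this.congr_deriv ?_
      rw [show (1 : ℝ) - k - 1 = -k by ring]
    have := h1.mul h2
    refine this.congr_deriv ?_
    have e1 : (1 + r ^ 2) ^ (1 - k) = (1 + r ^ 2) * (1 + r ^ 2) ^ (-k) := by
      rw [show (1:ℝ) - k = 1 + (-k) by ring, rpow_add hpos, rpow_one]
    have e2 : r ^ (a + 1) = r ^ a * r := by rw [rpow_add hr0, rpow_one]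
    have e3 : r ^ (a + 2) = r ^ a * r ^ 2 := by
      rw [rpow_add hr0, show ((2:ℝ)) = ((2:ℕ):ℝ) by norm_num, rpow_natCast]
    rw [hf']
    simp only [e1, e2, e3]
    ring
  have hcont : ContinuousWithinAt F (Ici (0:ℝ)) 0 := by
    apply ContinuousAt.continuousWithinAt
    apply ContinuousAt.mul
    · exact continuousAt_rpow_const 0 (a + 1) (Or.inr (by linarith))
    · exact (((continuous_const.add (continuous_pow 2)).continuousAt).rpow_const
        (Or.inl (by norm_num)))
  have hf'int : IntegrableOn f' (Ioi (0:ℝ)) := (hint1.const_mul _).add (hint2.const_mul _)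
  have htend : Tendsto F atTop (𝓝 0) := by
    apply squeeze_zero' (g := fun r : ℝ => r ^ (a + 3 - 2 * k))
    · filter_upwards [eventually_ge_atTop (1:ℝ)] with r hr
      have hr0 : (0:ℝ) < r := lt_of_lt_of_le zero_lt_one hr
      positivity
    · filter_upwards [eventually_ge_atTop (1:ℝ)] with r hr
      have hr0 : (0:ℝ) < r := lt_of_lt_of_le zero_lt_one hr
      have h2 : (1 + r ^ 2) ^ (1 - k) ≤ (r ^ 2) ^ (1 - k) :=
        rpow_le_rpow_of_nonpos (by positivity) (by nlinarith) (by linarith)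
      calc r ^ (a+1) * (1 + r ^ 2) ^ (1 - k) ≤ r ^ (a+1) * (r ^ 2) ^ (1 - k) :=
          mul_le_mul_of_nonneg_left h2 (rpow_nonneg hr0.le _)
        _ = r ^ (a + 3 - 2*k) := by
          rw [← rpow_natCast r 2, ← rpow_mul hr0.le, ← rpow_add hr0]
          congr 1; ring
    · have := tendsto_rpow_neg_atTop (y := 2*k - a - 3) (by linarith)
      convert this using 2 with r
      · congr 1; ring
  have key : ∫ r in Ioi (0:ℝ), f' r = 0 - F 0 :=
    integral_Ioi_of_hasDerivAt_of_tendsto hcont hderiv hf'int htend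
  have hF0 : F 0 = 0 := by
    rw [hF]
    simp [Real.zero_rpow (by linarith : a + 1 ≠ 0)]
  rw [hF0, sub_zero] at key
  rw [hf'] at key
  rw [integral_add (hint1.const_mul _) (hint2.const_mul _), integral_const_mul,
    integral_const_mul] at key
  have key2 : (a + 1) * I1 a k + (a + 3 - 2*k) * I1 (a+2) k = 0 := key
  have hne : 2*k - a - 3 ≠ 0 := by linarith
  field_simp
  linarith [key2]

lemma rpow_add_nat' {r : ℝ} (hr : 0 < r) (b : ℝ) (n : ℕ) :
    r ^ (b + n) = r ^ b * r ^ n := by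
  rw [rpow_add hr, rpow_natCast]

lemma int_eq (hd : 3 ≤ d) (g : Ed d → ℝ) (f : ℝ → ℝ) (c1 c2 c3 a1 a2 a3 k : ℝ)
    (ha1 : 0 ≤ a1) (hk1 : a1 + 1 < 2*k) (ha2 : 0 ≤ a2) (hk2 : a2 + 1 < 2*k)
    (ha3 : 0 ≤ a3) (hk3 : a3 + 1 < 2*k)
    (hg : ∀ x : Ed d, g x = f ‖x‖)
    (hf : ∀ r : ℝ, 0 < r → r ^ ((d:ℝ) - 1) * f r
        = c1 * (r ^ a1 * (1+r^2) ^ (-k)) + c2 * (r ^ a2 * (1+r^2) ^ (-k))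
          + c3 * (r ^ a3 * (1+r^2) ^ (-k))) :
    ∫ x : Ed d, g x = kap d * (c1 * I1 a1 k + c2 * I1 a2 k + c3 * I1 a3 k) := by
  have h1 := (integrableI1 ha1 hk1).const_mul c1
  have h2 := (integrableI1 ha2 hk2).const_mul c2
  have h3 := (integrableI1 ha3 hk3).const_mul c3
  have h12 : Integrable (fun r : ℝ => c1 * (r ^ a1 * (1+r^2) ^ (-k)) +
      c2 * (r ^ a2 * (1+r^2) ^ (-k))) (volume.restrict (Set.Ioi 0)) := h1.add h2
  calc ∫ x : Ed d, g x = ∫ x : Ed d, f ‖x‖ :=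
        integral_congr_ae (Filter.Eventually.of_forall hg)
    _ = kap d * ∫ r in Set.Ioi (0:ℝ), r ^ ((d:ℝ) - 1) * f r := polar hd f
    _ = kap d * (c1 * I1 a1 k + c2 * I1 a2 k + c3 * I1 a3 k) := by
        congr 1
        rw [MeasureTheory.setIntegral_congr_fun measurableSet_Ioi hf,
          integral_add h12 h3, integral_add h1 h2, integral_const_mul,
          integral_const_mul, integral_const_mul]
        simp only [I1]

set_option maxHeartbeats 1000000

/-- values of the quadratic form `Q` on `iW_0`, `W_1` and `W_0`. -/
theorem statement13 (d : ℕ) (hd : 3 ≤ d) :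
    Qform d (fun y : Ed d => Complex.I * (W0 d y : ℂ)) = 0 ∧
    Qform d (fun y : Ed d => (W1 d y : ℂ)) = 0 ∧
    Qform d (fun y : Ed d => (W0 d y : ℂ)) =
      -(2 / ((d : ℝ) - 2)) * ∫ x, W0 d x ^ ((2 * d : ℝ) / ((d : ℝ) - 2)) ∧
    Qform d (fun y : Ed d => (W0 d y : ℂ)) < 0 := by

  have hD : (3:ℝ) ≤ (d:ℝ) := by exact_mod_cast hd
  have hD2 : ((d:ℝ)) - 2 ≠ 0 := by linarith
  have hB : (0:ℝ) < (d:ℝ) * ((d:ℝ) - 2) := by nlinarith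
  have hcst2 : (cst d) ^ 2 = ((d:ℝ) * ((d:ℝ) - 2)) ^ (((d:ℝ) - 2)/2) := by
    rw [← rpow_natCast (cst d) 2, cst_rpow hd]
    congr 1
    push_cast; ring
  have hP : ((d:ℝ) * ((d:ℝ) - 2)) ^ ((d:ℝ)/2)
      = ((d:ℝ) * ((d:ℝ) - 2)) ^ (((d:ℝ) - 2)/2) * ((d:ℝ) * ((d:ℝ) - 2)) := by
    rw [show (d:ℝ)/2 = ((d:ℝ)-2)/2 + 1 by ring, rpow_add hB, rpow_one]
  -- exponent-shift identities
  have eshift : ∀ (n : ℕ) (r : ℝ), 0 < r → r ^ ((d:ℝ) - 1 + n) = r ^ ((d:ℝ) - 1) * r ^ n :=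
    fun n r hr => rpow_add_nat' hr _ n
  -- recurrences
  have hrec1 : I1 ((d:ℝ)+1) (d:ℝ) = (d:ℝ)/((d:ℝ)-2) * I1 ((d:ℝ)-1) (d:ℝ) := by
    have h := I1_rec (a := (d:ℝ)-1) (k := (d:ℝ)) (by linarith) (by linarith)
    rw [show (d:ℝ)-1+2 = (d:ℝ)+1 by ring] at h
    rw [h]; ring
  have hrecA : I1 ((d:ℝ)+1) ((d:ℝ)+2) = (d:ℝ)/((d:ℝ)+2) * I1 ((d:ℝ)-1) ((d:ℝ)+2) := by
    have h := I1_rec (a := (d:ℝ)-1) (k := (d:ℝ)+2) (by linarith) (by linarith)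
    rw [show (d:ℝ)-1+2 = (d:ℝ)+1 by ring] at h
    rw [h]; ring
  have hrecB : I1 ((d:ℝ)+3) ((d:ℝ)+2) = ((d:ℝ)+2)/(d:ℝ) * I1 ((d:ℝ)+1) ((d:ℝ)+2) := by
    have h := I1_rec (a := (d:ℝ)+1) (k := (d:ℝ)+2) (by linarith) (by linarith)
    rw [show (d:ℝ)+1+2 = (d:ℝ)+3 by ring] at h
    rw [h]; ring
  have hrecC : I1 ((d:ℝ)+5) ((d:ℝ)+2) = ((d:ℝ)+4)/((d:ℝ)-2) * I1 ((d:ℝ)+3) ((d:ℝ)+2) := by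
    have h := I1_rec (a := (d:ℝ)+3) (k := (d:ℝ)+2) (by linarith) (by linarith)
    rw [show (d:ℝ)+3+2 = (d:ℝ)+5 by ring] at h
    rw [h]; ring
  -- gradient integrals
  have hGiW0 : (∫ x : Ed d, gradNormSq (fun y : Ed d => Complex.I * (W0 d y : ℂ)) x)
      = kap d * ((cst d * ((d:ℝ)-2))^2 * I1 ((d:ℝ)+1) (d:ℝ)
        + 0 * I1 ((d:ℝ)+1) (d:ℝ) + 0 * I1 ((d:ℝ)+1) (d:ℝ)) := by
    refine int_eq hd _ (fun r => (cst d * ((d:ℝ)-2))^2 * (r ^ 2 * (1 + r ^ 2) ^ (-(d:ℝ))))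
      _ _ _ _ _ _ _ (by linarith) (by linarith) (by linarith) (by linarith)
      (by linarith) (by linarith)
      (fun x => (gradNormSq_I_mul (hasFDerivAt_W0 x)).trans (gradNormSqR_W0 x))
      (fun r hr => ?_)
    have e2 : r ^ ((d:ℝ)+1) = r ^ ((d:ℝ)-1) * r ^ (2:ℕ) := by
      rw [← eshift 2 r hr]; congr 1; push_cast; ring
    rw [e2]; push_cast; ring
  have hGW0 : (∫ x : Ed d, gradNormSq (fun y : Ed d => (W0 d y : ℂ)) x)
      = kap d * ((cst d * ((d:ℝ)-2))^2 * I1 ((d:ℝ)+1) (d:ℝ)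
        + 0 * I1 ((d:ℝ)+1) (d:ℝ) + 0 * I1 ((d:ℝ)+1) (d:ℝ)) := by
    refine int_eq hd _ (fun r => (cst d * ((d:ℝ)-2))^2 * (r ^ 2 * (1 + r ^ 2) ^ (-(d:ℝ))))
      _ _ _ _ _ _ _ (by linarith) (by linarith) (by linarith) (by linarith)
      (by linarith) (by linarith)
      (fun x => (gradNormSq_ofReal (hasFDerivAt_W0 x)).trans (gradNormSqR_W0 x))
      (fun r hr => ?_)
    have e2 : r ^ ((d:ℝ)+1) = r ^ ((d:ℝ)-1) * r ^ (2:ℕ) := by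
      rw [← eshift 2 r hr]; congr 1; push_cast; ring
    rw [e2]; push_cast; ring
  have hGW1 : (∫ x : Ed d, gradNormSq (fun y : Ed d => (W1 d y : ℂ)) x)
      = kap d * ((cst d * ((d:ℝ)-2))^2 * (((d:ℝ)+2)/2)^2 * I1 ((d:ℝ)+1) ((d:ℝ)+2)
        + (cst d * ((d:ℝ)-2))^2 * (2 * (((d:ℝ)+2)/2) * ((2-(d:ℝ))/2)) * I1 ((d:ℝ)+3) ((d:ℝ)+2)
        + (cst d * ((d:ℝ)-2))^2 * ((2-(d:ℝ))/2)^2 * I1 ((d:ℝ)+5) ((d:ℝ)+2)) := by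
    refine int_eq hd _ (fun r => (cst d * ((d:ℝ) - 2)) ^ 2 *
        ((((d:ℝ)+2)/2 + ((2-(d:ℝ))/2) * r ^ 2) ^ 2 *
          (r ^ 2 * (1 + r ^ 2) ^ (-((d:ℝ)+2)))))
      _ _ _ _ _ _ _ (by linarith) (by linarith) (by linarith) (by linarith)
      (by linarith) (by linarith)
      (fun x => (gradNormSq_ofReal (hasFDerivAt_W1 x)).trans (gradNormSqR_W1 x))
      (fun r hr => ?_)
    have e2 : r ^ ((d:ℝ)+1) = r ^ ((d:ℝ)-1) * r ^ (2:ℕ) := by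
      rw [← eshift 2 r hr]; congr 1; push_cast; ring
    have e4 : r ^ ((d:ℝ)+3) = r ^ ((d:ℝ)-1) * r ^ (4:ℕ) := by
      rw [← eshift 4 r hr]; congr 1; push_cast; ring
    have e6 : r ^ ((d:ℝ)+5) = r ^ ((d:ℝ)-1) * r ^ (6:ℕ) := by
      rw [← eshift 6 r hr]; congr 1; push_cast; ring
    rw [e2, e4, e6]; push_cast; ring
  -- potential integrals
  have hkey0 : ∀ x : Ed d, W0 d x ^ ((4:ℝ)/((d:ℝ)-2)) * (W0 d x) ^ 2
      = ((d:ℝ) * ((d:ℝ)-2)) ^ ((d:ℝ)/2) * (1 + ‖x‖ ^ 2) ^ (-(d:ℝ)) := by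
    intro x
    rw [← rpow_natCast (W0 d x) 2, ← rpow_add (W0_pos hd x), W0_rpow hd x]
    congr 2
    · field_simp; ring
    · field_simp; ring
  have hPiW0 : (∫ x : Ed d, W0 d x ^ ((4:ℝ)/((d:ℝ)-2)) *
      ((((d:ℝ)+2)/((d:ℝ)-2)) * ((fun y : Ed d => Complex.I * (W0 d y : ℂ)) x).re ^ 2
        + ((fun y : Ed d => Complex.I * (W0 d y : ℂ)) x).im ^ 2))
      = kap d * (((d:ℝ) * ((d:ℝ)-2)) ^ ((d:ℝ)/2) * I1 ((d:ℝ)-1) (d:ℝ)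
        + 0 * I1 ((d:ℝ)-1) (d:ℝ) + 0 * I1 ((d:ℝ)-1) (d:ℝ)) := by
    refine int_eq hd _ (fun r => ((d:ℝ) * ((d:ℝ)-2)) ^ ((d:ℝ)/2) * (1 + r ^ 2) ^ (-(d:ℝ)))
      _ _ _ _ _ _ _ (by linarith) (by linarith) (by linarith) (by linarith)
      (by linarith) (by linarith) (fun x => ?_) (fun r hr => by ring)
    have hre : (Complex.I * ((W0 d x : ℝ) : ℂ)).re = 0 := by simp
    have him : (Complex.I * ((W0 d x : ℝ) : ℂ)).im = W0 d x := by simp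
    simp only [hre, him]
    calc W0 d x ^ ((4:ℝ)/((d:ℝ)-2)) * ((((d:ℝ)+2)/((d:ℝ)-2)) * 0 ^ 2 + (W0 d x) ^ 2)
        = W0 d x ^ ((4:ℝ)/((d:ℝ)-2)) * (W0 d x) ^ 2 := by ring
      _ = _ := hkey0 x
  have hPW0 : (∫ x : Ed d, W0 d x ^ ((4:ℝ)/((d:ℝ)-2)) *
      ((((d:ℝ)+2)/((d:ℝ)-2)) * ((fun y : Ed d => ((W0 d y : ℝ) : ℂ)) x).re ^ 2
        + ((fun y : Ed d => ((W0 d y : ℝ) : ℂ)) x).im ^ 2))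
      = kap d * ((((d:ℝ)+2)/((d:ℝ)-2)) * ((d:ℝ) * ((d:ℝ)-2)) ^ ((d:ℝ)/2) * I1 ((d:ℝ)-1) (d:ℝ)
        + 0 * I1 ((d:ℝ)-1) (d:ℝ) + 0 * I1 ((d:ℝ)-1) (d:ℝ)) := by
    refine int_eq hd _ (fun r => (((d:ℝ)+2)/((d:ℝ)-2)) *
        (((d:ℝ) * ((d:ℝ)-2)) ^ ((d:ℝ)/2) * (1 + r ^ 2) ^ (-(d:ℝ))))
      _ _ _ _ _ _ _ (by linarith) (by linarith) (by linarith) (by linarith)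
      (by linarith) (by linarith) (fun x => ?_) (fun r hr => by ring)
    have hre : (((W0 d x : ℝ) : ℂ)).re = W0 d x := by simp
    have him : (((W0 d x : ℝ) : ℂ)).im = 0 := by simp
    simp only [hre, him]
    calc W0 d x ^ ((4:ℝ)/((d:ℝ)-2)) * ((((d:ℝ)+2)/((d:ℝ)-2)) * (W0 d x) ^ 2 + 0 ^ 2)
        = (((d:ℝ)+2)/((d:ℝ)-2)) * (W0 d x ^ ((4:ℝ)/((d:ℝ)-2)) * (W0 d x) ^ 2) := by ring
      _ = _ := by rw [hkey0 x]
  have hPW1 : (∫ x : Ed d, W0 d x ^ ((4:ℝ)/((d:ℝ)-2)) *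
      ((((d:ℝ)+2)/((d:ℝ)-2)) * ((fun y : Ed d => ((W1 d y : ℝ) : ℂ)) x).re ^ 2
        + ((fun y : Ed d => ((W1 d y : ℝ) : ℂ)) x).im ^ 2))
      = kap d * ((((d:ℝ)+2)/((d:ℝ)-2) * ((d:ℝ)*((d:ℝ)-2)) * (cst d * ((d:ℝ)-2)/2)^2)
          * I1 ((d:ℝ)-1) ((d:ℝ)+2)
        + (-(2 * (((d:ℝ)+2)/((d:ℝ)-2) * ((d:ℝ)*((d:ℝ)-2)) * (cst d * ((d:ℝ)-2)/2)^2)))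
          * I1 ((d:ℝ)+1) ((d:ℝ)+2)
        + (((d:ℝ)+2)/((d:ℝ)-2) * ((d:ℝ)*((d:ℝ)-2)) * (cst d * ((d:ℝ)-2)/2)^2)
          * I1 ((d:ℝ)+3) ((d:ℝ)+2)) := by
    refine int_eq hd _ (fun r => (((d:ℝ)+2)/((d:ℝ)-2) * ((d:ℝ)*((d:ℝ)-2))
        * (cst d * ((d:ℝ)-2)/2)^2) * ((1 - r ^ 2) ^ 2 * (1 + r ^ 2) ^ (-((d:ℝ)+2))))
      _ _ _ _ _ _ _ (by linarith) (by linarith) (by linarith) (by linarith)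
      (by linarith) (by linarith) (fun x => ?_) (fun r hr => ?_)
    · have hpos : (0:ℝ) < 1 + ‖x‖ ^ 2 := by positivity
      have hre : (((W1 d x : ℝ) : ℂ)).re = W1 d x := by simp
      have him : (((W1 d x : ℝ) : ℂ)).im = 0 := by simp
      simp only [hre, him]
      have e0 : W0 d x ^ ((4:ℝ)/((d:ℝ)-2))
          = ((d:ℝ) * ((d:ℝ)-2)) * (1 + ‖x‖ ^ 2) ^ (-(2:ℝ)) := by
        rw [W0_rpow hd x, show ((d:ℝ)-2)/4 * ((4:ℝ)/((d:ℝ)-2)) = 1 by field_simp,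
          show (-(((d:ℝ)-2)/2)) * ((4:ℝ)/((d:ℝ)-2)) = -(2:ℝ) by field_simp; ring, rpow_one]
      have e1 : ((1 + ‖x‖ ^ 2) ^ (-((d:ℝ)/2))) ^ 2 = (1 + ‖x‖ ^ 2) ^ (-(d:ℝ)) := by
        rw [rpow_sq_helper (by positivity)]; congr 1; ring
      have e2 : (1 + ‖x‖ ^ 2) ^ (-(2:ℝ)) * (1 + ‖x‖ ^ 2) ^ (-(d:ℝ))
          = (1 + ‖x‖ ^ 2) ^ (-((d:ℝ)+2)) := by
        rw [← rpow_add hpos]; congr 1; ring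
      rw [e0, W1_eq x, mul_pow, mul_pow, e1, ← e2]
      ring
    · have e2 : r ^ ((d:ℝ)+1) = r ^ ((d:ℝ)-1) * r ^ (2:ℕ) := by
        rw [← eshift 2 r hr]; congr 1; push_cast; ring
      have e4 : r ^ ((d:ℝ)+3) = r ^ ((d:ℝ)-1) * r ^ (4:ℕ) := by
        rw [← eshift 4 r hr]; congr 1; push_cast; ring
      rw [e2, e4]; push_cast; ring
  have hPcrit : (∫ x : Ed d, W0 d x ^ ((2 * (d:ℝ)) / ((d:ℝ) - 2)))
      = kap d * (((d:ℝ) * ((d:ℝ)-2)) ^ ((d:ℝ)/2) * I1 ((d:ℝ)-1) (d:ℝ)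
        + 0 * I1 ((d:ℝ)-1) (d:ℝ) + 0 * I1 ((d:ℝ)-1) (d:ℝ)) := by
    refine int_eq hd _ (fun r => ((d:ℝ) * ((d:ℝ)-2)) ^ ((d:ℝ)/2) * (1 + r ^ 2) ^ (-(d:ℝ)))
      _ _ _ _ _ _ _ (by linarith) (by linarith) (by linarith) (by linarith)
      (by linarith) (by linarith) (fun x => ?_) (fun r hr => by ring)
    rw [W0_rpow hd x, show ((d:ℝ)-2)/4 * ((2*(d:ℝ))/((d:ℝ)-2)) = (d:ℝ)/2 by field_simp; ring,
      show (-(((d:ℝ)-2)/2)) * ((2*(d:ℝ))/((d:ℝ)-2)) = -(d:ℝ) by field_simp]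
  -- the third claim first
  have hQ3 : Qform d (fun y : Ed d => (W0 d y : ℂ)) =
      -(2 / ((d : ℝ) - 2)) * ∫ x, W0 d x ^ ((2 * d : ℝ) / ((d : ℝ) - 2)) := by
    simp only [Qform]
    rw [hGW0, hPW0, hPcrit, hrec1, mul_pow, hcst2, hP]
    field_simp
    ring
  refine ⟨?_, ?_, hQ3, ?_⟩
  · simp only [Qform]
    rw [hGiW0, hPiW0, hrec1, mul_pow, hcst2, hP]
    field_simp
    ring
  · simp only [Qform]
    rw [hGW1, hPW1, hrecC, hrecB, hrecA]
    field_simp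
    ring
  · rw [hQ3, hPcrit]
    have hXpos : 0 < I1 ((d:ℝ)-1) (d:ℝ) := I1_pos (by linarith) (by linarith)
    have hPpos : (0:ℝ) < ((d:ℝ) * ((d:ℝ)-2)) ^ ((d:ℝ)/2) := rpow_pos_of_pos hB _
    have h5 : kap d * (((d:ℝ) * ((d:ℝ)-2)) ^ ((d:ℝ)/2) * I1 ((d:ℝ)-1) (d:ℝ)
        + 0 * I1 ((d:ℝ)-1) (d:ℝ) + 0 * I1 ((d:ℝ)-1) (d:ℝ))
        = kap d * (((d:ℝ) * ((d:ℝ)-2)) ^ ((d:ℝ)/2) * I1 ((d:ℝ)-1) (d:ℝ)) := by ring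
    rw [h5]
    apply mul_neg_of_neg_of_pos
    · have : (0:ℝ) < 2 / ((d:ℝ)-2) := div_pos two_pos (by linarith)
      linarith
    · exact mul_pos (kap_pos hd) (mul_pos hPpos hXpos)
end
end
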